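/- Let T* be a triad of a 3-connected matroid M with r*(M) ≥ 3, and suppose T* is not contained in any 4-element fan of M. Then for any two distinct elements a, b ∈ T*, at least one of M/a and M/b is 3-connected. -/

import Mathlib

open Set

namespace PaperDefs

variable {α : Type*}

/-- The rank of a set `X` in a matroid `M`, as an extended natural number:
the supremum of the cardinalities of independent subsets of `X`. -/
noncomputable def eRk (M : Matroid α) (X : Set α) : ℕ∞ :=
  ⨆ I ∈ {I | M.Indep I ∧ I ⊆ X}, I.encard

/-- Deletion of a set of elements from a matroid. -/
def del (M : Matroid α) (D : Set α) : Matroid α := M.restrict (M.E \ D)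

/-- Contraction of a set of elements in a matroid. -/
def con (M : Matroid α) (C : Set α) : Matroid α := (del M✶ C)✶

/-- A circuit: a minimal dependent set. -/
def Circuit (M : Matroid α) (C : Set α) : Prop :=
  M.Dep C ∧ ∀ D, D ⊂ C → M.Indep D

/-- A `k`-separation of `M`: a partition `(X, M.E \ X)` with connectivity
`λ(X) = r(X) + r(E−X) − r(M)` at most `k − 1`, and both sides of size at least `k`. -/
def kSeparation (M : Matroid α) (X : Set α) (k : ℕ) : Prop :=
  X ⊆ M.E ∧ eRk M X + eRk M (M.E \ X) ≤ eRk M M.E + ((k - 1 : ℕ) : ℕ∞) ∧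
    (k : ℕ∞) ≤ X.encard ∧ (k : ℕ∞) ≤ (M.E \ X).encard

/-- `M` is `n`-connected if it has no `k`-separations for `0 < k < n`. -/
def NConnected (M : Matroid α) (n : ℕ) : Prop :=
  ∀ k : ℕ, 0 < k → k < n → ∀ X : Set α, ¬ kSeparation M X k

/-- `X` is 3-separating in `M`: `λ_M(X) ≤ 2`. -/
def ThreeSeparating (M : Matroid α) (X : Set α) : Prop :=
  eRk M X + eRk M (M.E \ X) ≤ eRk M M.E + 2

/-- `X` is exactly 3-separating in `M`: `λ_M(X) = 2`. -/
def ExactlyThreeSeparating (M : Matroid α) (X : Set α) : Prop :=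
  eRk M X + eRk M (M.E \ X) = eRk M M.E + 2

/-- `N` is a simplification of `M`: `N` is obtained from `M` by deleting a set of
elements, `N` has no loops or parallel pairs (no circuits of size at most two), and
every element of `M` is in the closure of the ground set of `N`. -/
def IsSimplificationOf (N M : Matroid α) : Prop :=
  (∃ D ⊆ M.E, N = del M D) ∧ (∀ C, Circuit N C → 3 ≤ C.encard) ∧
    M.closure N.E = M.E

/-- `N` is a cosimplification of `M`: `N✶` is a simplification of `M✶`. -/
def IsCosimplificationOf (N M : Matroid α) : Prop :=
  IsSimplificationOf N✶ M✶

/-- `S` is a series class of `M`: a maximal nonempty set any two distinct elements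
of which form a series pair (a two-element cocircuit). -/
def IsSeriesClass (M : Matroid α) (S : Set α) : Prop :=
  S.Nonempty ∧ S ⊆ M.E ∧ (∀ a ∈ S, ∀ b ∈ S, a ≠ b → Circuit M✶ {a, b}) ∧
    (∀ a ∈ S, ∀ f, Circuit M✶ {a, f} → a ≠ f → f ∈ S)

/-- The full closure of `X` in `M`: the intersection of all sets containing `X ∩ M.E`
that are closed in both `M` and `M✶`. -/
def fullClosure (M : Matroid α) (X : Set α) : Set α :=
  ⋂₀ {F | X ∩ M.E ⊆ F ∧ M.closure F = F ∧ M✶.closure F = F}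

end PaperDefs

namespace PaperDefs

variable {α : Type*}

variable {M : Matroid α} {I X Y S T C : Set α} {a b d e : α}

lemma le_eRk_of_indep (h1 : M.Indep I) (h2 : I ⊆ X) : I.encard ≤ eRk M X := by
  exact le_biSup _ (show I ∈ {I | M.Indep I ∧ I ⊆ X} from ⟨h1, h2⟩)

lemma eRk_le_of (h : ∀ I, M.Indep I → I ⊆ X → I.encard ≤ c) : eRk M X ≤ c :=
  iSup₂_le fun I hI => h I hI.1 hI.2

lemma eRk_mono (h : X ⊆ Y) : eRk M X ≤ eRk M Y :=
  eRk_le_of fun I hI hIX => le_eRk_of_indep hI (hIX.trans h)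

lemma eRk_le_encard (M : Matroid α) (X : Set α) : eRk M X ≤ X.encard :=
  eRk_le_of fun _ _ h => encard_mono h

lemma indep_eRk_eq (h : M.Indep I) : eRk M I = I.encard :=
  le_antisymm (eRk_le_encard M I) (le_eRk_of_indep h subset_rfl)

lemma eRk_le_ground (M : Matroid α) (X : Set α) : eRk M X ≤ eRk M M.E :=
  eRk_le_of fun I hI _ => le_eRk_of_indep hI hI.subset_ground

lemma eRk_eq_encard_of_basis' (h : M.IsBasis' I X) : eRk M X = I.encard := by
  refine le_antisymm (eRk_le_of fun J hJ hJX => ?_) (le_eRk_of_indep h.indep h.subset)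
  by_contra hlt
  push_neg at hlt
  obtain ⟨f, hf, hind⟩ := h.indep.augment hJ hlt
  have h1 : insert f I ⊆ I := h.2 ⟨hind, insert_subset (hJX hf.1) h.subset⟩ (subset_insert _ _)
  exact hf.2 (h1 (mem_insert _ _))

lemma eRk_submod (M : Matroid α) (X Y : Set α) :
    eRk M (X ∪ Y) + eRk M (X ∩ Y) ≤ eRk M X + eRk M Y := by
  obtain ⟨I, hI⟩ := M.exists_isBasis' (X ∩ Y)
  obtain ⟨J, hJ, hIJ⟩ := hI.indep.subset_isBasis'_of_subset (hI.subset.trans (inter_subset_left.trans subset_union_left))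
  rw [eRk_eq_encard_of_basis' hJ, eRk_eq_encard_of_basis' hI]
  have h1 : (J ∩ X).encard ≤ eRk M X := le_eRk_of_indep (hJ.indep.subset inter_subset_left)
    inter_subset_right
  have h2 : (J ∩ Y).encard ≤ eRk M Y := le_eRk_of_indep (hJ.indep.subset inter_subset_left)
    inter_subset_right
  have hu : J ∩ X ∪ J ∩ Y = J := by
    rw [← inter_union_distrib_left, inter_eq_self_of_subset_left hJ.subset]
  have hcalc : J.encard + I.encard ≤ (J ∩ X).encard + (J ∩ Y).encard := by
    have := encard_union_add_encard_inter (J ∩ X) (J ∩ Y)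
    rw [hu, ← inter_inter_distrib_left] at this
    rw [← this]
    exact add_le_add_right (encard_mono (subset_inter hIJ hI.subset)) _
  exact hcalc.trans (add_le_add h1 h2)

lemma eRk_insert_le (M : Matroid α) (e : α) (X : Set α) :
    eRk M (insert e X) ≤ eRk M X + 1 := by
  have h := eRk_submod M X {e}
  have : X ∪ {e} = insert e X := union_singleton
  rw [this] at h
  calc eRk M (insert e X) ≤ eRk M (insert e X) + eRk M (X ∩ {e}) := le_self_add
    _ ≤ eRk M X + eRk M {e} := h
    _ ≤ eRk M X + 1 := by
        exact add_le_add_right ((eRk_le_encard M _).trans (by simp)) _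

lemma eRk_empty (M : Matroid α) : eRk M ∅ = 0 := by
  simpa using eRk_le_encard M ∅

lemma base_eRk (h : M.IsBase B) : eRk M M.E = B.encard := by
  exact eRk_eq_encard_of_basis' ⟨⟨h.indep, h.subset_ground⟩,
    fun J hJ hBJ => (h.eq_of_subset_indep hJ.1 hBJ).symm.subset⟩

lemma dep_of_eRk_lt_encard (hX : X ⊆ M.E) (h : eRk M X < X.encard) : M.Dep X := by
  refine ⟨fun hind => ?_, hX⟩
  rw [indep_eRk_eq hind] at h
  exact lt_irrefl _ h

lemma exists_circuit_of_dep (hfin : S.Finite) (hS : M.Dep S) : ∃ C ⊆ S, Circuit M C := by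
  classical
  obtain ⟨n, hn⟩ : ∃ n, S.ncard = n := ⟨_, rfl⟩
  induction n using Nat.strong_induction_on generalizing S with
  | _ n ih =>
    by_cases hall : ∀ D, D ⊂ S → M.Indep D
    · exact ⟨S, subset_rfl, hS, hall⟩
    · push_neg at hall
      obtain ⟨D, hDS, hDind⟩ := hall
      have hDdep : M.Dep D := ⟨hDind, hDS.subset.trans hS.2⟩
      obtain ⟨C, hCD, hC⟩ := ih (D.ncard) (by
          subst hn; exact Set.ncard_lt_ncard hDS hfin) (hfin.subset hDS.subset) hDdep rfl
      exact ⟨C, hCD.trans hDS.subset, hC⟩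

lemma circuit_er_diff (hC : Circuit M C) (hd : d ∈ C) : eRk M C = (C \ {d}).encard := by
  refine eRk_eq_encard_of_basis' ⟨⟨hC.2 _ (Set.sdiff_singleton_ssubset.2 hd), diff_subset⟩,
    fun J hJ hsub => ?_⟩
  intro z hz
  by_contra hzd'
  have hzC : C ⊆ J := by
    intro w hw
    rcases eq_or_ne w d with rfl | hne
    · have : z = w := by
        by_contra h'
        exact hzd' ⟨hJ.2 hz, h'⟩
      rwa [← this]
    · exact hsub ⟨hw, hne⟩
  exact absurd (hJ.1.subset hzC) hC.1.not_indep

lemma circuit_er_diff' (hC : Circuit M C) (hd : d ∈ C) : eRk M C = eRk M (C \ {d}) := by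
  rw [circuit_er_diff hC hd, indep_eRk_eq (hC.2 _ (Set.sdiff_singleton_ssubset.2 hd))]

lemma circuit_finite (hfin : eRk M M.E ≠ ⊤) (hC : Circuit M C) : C.Finite := by
  by_contra hinf
  rw [← Set.not_infinite, not_not] at hinf
  obtain ⟨t, htC, ht⟩ := Set.exists_subset_encard_eq
    (show eRk M M.E + 1 ≤ C.encard by rw [hinf.encard_eq]; exact le_top)
  have htne : t ≠ C := by
    intro h
    rw [h, hinf.encard_eq] at ht
    exact (WithTop.add_ne_top.2 ⟨hfin, ENat.one_ne_top⟩) ht.symm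
  have hind : M.Indep t := hC.2 t (ssubset_of_subset_of_ne htC htne)
  have h2 : t.encard ≤ eRk M M.E := le_eRk_of_indep hind hind.subset_ground
  rw [ht] at h2
  exact absurd ((ENat.add_one_le_iff hfin).1 h2) (lt_irrefl _)

lemma absorb (hST : S ⊆ T) (h : eRk M (insert d S) ≤ eRk M S) (hS : eRk M S ≠ ⊤) :
    eRk M (insert d T) ≤ eRk M T := by
  have hsub := eRk_submod M T (insert d S)
  have hU : T ∪ insert d S = insert d T := by
    rw [union_insert, union_eq_self_of_subset_right hST]
  rw [hU] at hsub
  have hX : eRk M S ≤ eRk M (T ∩ insert d S) :=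
    eRk_mono (subset_inter hST (subset_insert _ _))
  have hchain : eRk M (insert d T) + eRk M S ≤ eRk M T + eRk M S :=
    le_trans (add_le_add_right hX _) (hsub.trans (add_le_add_right h _))
  exact (WithTop.add_le_add_iff_right hS).1 hchain

lemma clmem_circuit (hfin : eRk M M.E ≠ ⊤) (hbS : b ∉ S) (hSE : S ⊆ M.E) (hbE : b ∈ M.E)
    (h : eRk M (insert b S) ≤ eRk M S) :
    ∃ C, Circuit M C ∧ b ∈ C ∧ C ⊆ insert b S := by
  obtain ⟨I, hI⟩ := M.exists_isBasis' S
  have hIenc : I.encard ≠ ⊤ := by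
    rw [← eRk_eq_encard_of_basis' hI]
    exact fun ht => hfin (top_le_iff.1 (ht ▸ eRk_le_ground M S))
  have hIfin : I.Finite := Set.encard_ne_top_iff.1 hIenc
  have hbI : b ∉ I := fun hbI => hbS (hI.subset hbI)
  have hdep : M.Dep (insert b I) := by
    refine ⟨fun hind => ?_, insert_subset hbE (hI.indep.subset_ground)⟩
    have h1 : (insert b I).encard ≤ eRk M (insert b S) :=
      le_eRk_of_indep hind (insert_subset_insert hI.subset)
    rw [encard_insert_of_notMem hbI] at h1
    have h2 : I.encard + 1 ≤ I.encard :=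
      h1.trans (h.trans (eRk_eq_encard_of_basis' hI).le)
    exact absurd ((ENat.add_one_le_iff hIenc).1 h2) (lt_irrefl _)
  obtain ⟨C, hCsub, hC⟩ := exists_circuit_of_dep (hIfin.insert b) hdep
  refine ⟨C, hC, ?_, hCsub.trans (insert_subset_insert hI.subset)⟩
  by_contra hbC
  have : C ⊆ I := fun z hz => ((hCsub hz).resolve_left (fun h' => hbC (h' ▸ hz)))
  exact hC.1.not_indep (hI.indep.subset this)

@[simp] lemma con_ground (M : Matroid α) (a : α) : (con M {a}).E = M.E \ {a} := rfl

lemma con_indep_iff (ha : M.Indep {a}) {I : Set α} :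
    (con M {a}).Indep I ↔ I ⊆ M.E \ {a} ∧ M.Indep (insert a I) := by
  have haE : a ∈ M.E := ha.subset_ground rfl
  have hgr : M✶.E \ {a} = M.E \ {a} := rfl
  rw [con, del, Matroid.dual_indep_iff_exists']
  simp only [Matroid.restrict_ground_eq, Matroid.isBase_restrict_iff', hgr]
  constructor
  · rintro ⟨hIE, B, hB, hdisj⟩
    refine ⟨hIE, ?_⟩
    have hBb : M✶.IsBasis B (M.E \ {a}) := hB.isBasis (diff_subset.trans (by rw [Matroid.dual_ground]))
    obtain ⟨D, hD, hBD⟩ := hB.indep.exists_isBase_superset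
    have hDE : D ⊆ M.E := hD.subset_ground
    have h1 : B = D ∩ (M.E \ {a}) := hBb.eq_of_subset_indep
      (hD.indep.subset inter_subset_left) (subset_inter hBD hB.subset) inter_subset_right
    have haD : a ∉ D := by
      intro haD
      obtain ⟨D0, hD0, hD0a⟩ := (ha.coindep).exists_isBase_subset_compl
      have haD0 : a ∉ D0 := fun h => (hD0a h).2 rfl
      obtain ⟨g, hg, hgB⟩ := hD.exchange hD0 ⟨haD, haD0⟩
      have hDa : D \ {a} = D ∩ (M.E \ {a}) := by
        ext z
        simp only [mem_diff, mem_singleton_iff, mem_inter_iff]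
        exact ⟨fun ⟨h1', h2'⟩ => ⟨h1', hDE h1', h2'⟩, fun ⟨h1', _, h3'⟩ => ⟨h1', h3'⟩⟩
      rw [hDa, ← h1] at hgB
      have hgE : g ∈ M.E \ {a} := ⟨(hD0.subset_ground hg.1 : g ∈ M✶.E), fun h => haD0 (h ▸ hg.1)⟩
      have hgnB : g ∉ B := fun h => hg.2 (hBD h)
      have := hBb.eq_of_subset_indep hgB.indep (subset_insert _ _)
        (insert_subset hgE hBb.subset)
      exact hgnB (this ▸ mem_insert _ _)
    have hDB' : D ⊆ B := by
      intro z hz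
      rcases eq_or_ne z a with rfl | hne
      · exact absurd hz haD
      · rw [h1]; exact ⟨hz, hDE hz, hne⟩
    have hcompl : M.IsBase (M.E \ D) := hD.compl_isBase_of_dual
    refine hcompl.indep.subset (insert_subset ⟨haE, haD⟩ ?_)
    intro z hz
    exact ⟨(hIE hz).1, fun hzD => (disjoint_left.1 hdisj hz) (hDB' hzD)⟩
  · rintro ⟨hIE, hind⟩
    obtain ⟨Bs, hBs, hsub⟩ := hind.exists_isBase_superset
    refine ⟨hIE, M.E \ Bs, ?_, ?_⟩
    · have hdb : M✶.IsBase (M.E \ Bs) := hBs.compl_isBase_dual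
      exact ⟨⟨hdb.indep, fun z hz => ⟨hz.1, fun h => hz.2 (hsub (h ▸ mem_insert _ _))⟩⟩,
        fun J hJ hBJ => (hdb.eq_of_subset_indep hJ.1 hBJ).symm.subset⟩
    · exact disjoint_left.2 fun z hz h' => h'.2 (hsub (mem_insert_of_mem _ hz))


lemma con_eRk (ha : M.Indep {a}) (hS : S ⊆ M.E \ {a}) :
    eRk (con M {a}) S + 1 = eRk M (insert a S) := by
  obtain ⟨J, hJ⟩ := (con M {a}).exists_isBasis' S
  have hJc := (con_indep_iff ha).1 hJ.indep
  have haJ : a ∉ J := fun h => (hJc.1 h).2 rfl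
  have hbig : M.IsBasis' (insert a J) (insert a S) := by
    refine ⟨⟨hJc.2, insert_subset_insert hJ.subset⟩, ?_⟩
    intro K hK hsub z hz
    rcases eq_or_ne z a with rfl | hne
    · exact mem_insert _ _
    · have hzS : z ∈ S := ((hK.2 hz).resolve_left hne)
      have hzJ : (con M {a}).Indep (insert z J) := (con_indep_iff ha).2
        ⟨insert_subset (hS hzS) hJc.1,
         hK.1.subset (by
           rw [Set.insert_comm]
           exact insert_subset hz (insert_subset (hsub (mem_insert _ _))
             (fun w hw => hsub (mem_insert_of_mem _ hw))))⟩
      have hzJ' := hJ.2 ⟨hzJ, insert_subset hzS hJ.subset⟩ (subset_insert _ _)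
      exact mem_insert_of_mem _ (hzJ' (mem_insert _ _))
  rw [eRk_eq_encard_of_basis' hJ, eRk_eq_encard_of_basis' hbig,
    encard_insert_of_notMem haJ]

end PaperDefs


open PaperDefs


namespace PaperDefs

section TstarFacts

variable {α : Type*} {M : Matroid α} {Tstar : Set α} {W Z S C : Set α} {d x w : α}

lemma ne_top_of_ground (hfin : eRk M M.E ≠ ⊤) (X : Set α) : eRk M X ≠ ⊤ :=
  fun h => hfin (top_le_iff.1 (h ▸ eRk_le_ground M X))

lemma enat_cast_lemma_test : (3 : ℕ∞) < 4 := by norm_num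


lemma exists_nat_cast_eq {x : ℕ∞} (hx : x ≠ ⊤) : ∃ n : ℕ, (n : ℕ∞) = x := by
  obtain ⟨n, hn⟩ := WithTop.ne_top_iff_exists.1 hx
  exact ⟨n, hn⟩

lemma sep_lb (h3 : NConnected M 3) (hfin : eRk M M.E ≠ ⊤) {k : ℕ} (hk0 : 0 < k) (hk3 : k < 3)
    (hW : W ⊆ M.E) (hZ : Z = M.E \ W) (h1 : (k : ℕ∞) ≤ W.encard) (h2 : (k : ℕ∞) ≤ Z.encard) :
    eRk M M.E + k ≤ eRk M W + eRk M Z := by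
  by_contra hcon
  push_neg at hcon
  refine h3 k hk0 hk3 W ⟨hW, ?_, h1, hZ ▸ h2⟩
  rw [← hZ]
  have hk1 : ((k : ℕ∞)) = ((k-1 : ℕ) : ℕ∞) + 1 := by
    have : k - 1 + 1 = k := Nat.succ_pred_eq_of_pos hk0
    exact_mod_cast (congrArg (Nat.cast : ℕ → ℕ∞) this).symm
  rw [hk1, ← add_assoc] at hcon
  exact (ENat.lt_add_one_iff (WithTop.add_ne_top.2 ⟨hfin, ENat.coe_ne_top _⟩)).1 hcon

lemma small_compl (hE4 : 4 ≤ M.E.encard) (hW : W.encard ≤ 2) : 2 ≤ (M.E \ W).encard := by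
  have hsub : M.E ⊆ (M.E \ W) ∪ W := fun z hz => by
    by_cases h : z ∈ W
    · exact Or.inr h
    · exact Or.inl ⟨hz, h⟩
  have h1 : 4 ≤ (M.E \ W).encard + W.encard :=
    hE4.trans ((encard_mono hsub).trans (encard_union_le _ _))
  by_cases ht : (M.E \ W).encard = ⊤
  · rw [ht]; exact le_top
  · obtain ⟨n, hn⟩ := exists_nat_cast_eq ht
    rw [← hn]
    have h2 : (4:ℕ∞) ≤ (n:ℕ∞) + 2 := h1.trans (by rw [← hn]; exact add_le_add_right hW _)
    have h3 : (4:ℕ) ≤ n + 2 := by exact_mod_cast h2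
    have h4 : (2:ℕ) ≤ n := by omega
    simpa using (Nat.cast_le.2 h4 : ((2:ℕ):ℕ∞) ≤ (n:ℕ∞))

lemma nonempty_compl_singleton (hE4 : 4 ≤ M.E.encard) (x : α) : 1 ≤ (M.E \ {x}).encard :=
  le_trans (by norm_num) (small_compl hE4 (by rw [encard_singleton]; norm_num))

lemma smallcirc (h3 : NConnected M 3) (hfin : eRk M M.E ≠ ⊤) (hE4 : 4 ≤ M.E.encard)
    (hC : Circuit M C) : 3 ≤ C.encard := by
  by_contra hlt
  push_neg at hlt
  have hC2 : C.encard ≤ 2 := Order.le_of_lt_add_one (by exact_mod_cast hlt)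
  have hCE : C ⊆ M.E := hC.1.2
  have hCne : C.Nonempty := by
    rcases C.eq_empty_or_nonempty with rfl | h
    · exact absurd M.empty_indep hC.1.not_indep
    · exact h
  obtain ⟨e, he⟩ := hCne
  by_cases hCe : C = {e}
  · -- loop
    have hr : eRk M C = 0 := by
      rw [circuit_er_diff hC he, hCe]; simp
    have := sep_lb h3 hfin one_pos (by norm_num) (hCe ▸ hCE : ({e} : Set α) ⊆ M.E) rfl
      (by simp) (nonempty_compl_singleton hE4 e)
    rw [← hCe] at this
    have h2 : eRk M M.E + 1 ≤ eRk M (M.E \ C) := by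
      rw [hr] at this; simpa using this
    have h3' : eRk M M.E + 1 ≤ eRk M M.E := h2.trans (eRk_le_ground M _)
    exact absurd ((ENat.add_one_le_iff hfin).1 h3') (lt_irrefl _)
  · -- two-element circuit
    obtain ⟨f, hf, hfe⟩ : ∃ f ∈ C, f ≠ e := by
      by_contra hcc
      push_neg at hcc
      exact hCe (Subset.antisymm (fun z hz => hcc z hz) (singleton_subset_iff.2 he))
    have hCef : C = {e, f} := by
      refine (Finite.eq_of_subset_of_encard_le' ?_ ?_ ?_).symm
      · exact Set.encard_ne_top_iff.1 (fun h => by rw [h] at hC2; exact absurd hC2 (by norm_num))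
      · exact insert_subset he (singleton_subset_iff.2 hf)
      · rw [encard_pair (Ne.symm hfe)] at *; exact hC2
    have hr : eRk M C ≤ 1 := by
      rw [circuit_er_diff hC hf]
      refine le_trans (encard_mono (fun z hz => ?_)) (by simp : ({e}:Set α).encard ≤ 1)
      rw [hCef] at hz
      rcases hz.1 with rfl | h
      · rfl
      · exact absurd (mem_singleton_iff.1 h) hz.2
    have hbig := sep_lb h3 hfin (zero_lt_two) (by norm_num) hCE rfl
      (by rw [hCef, encard_pair (Ne.symm hfe)]; exact_mod_cast le_rfl) (small_compl hE4 hC2)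
    have hchain : eRk M M.E + 2 ≤ eRk M M.E + 1 :=
      hbig.trans (by
        refine add_le_add hr (eRk_le_ground M _) |>.trans ?_
        rw [add_comm])
    have := (WithTop.add_le_add_iff_left hfin).1 hchain
    exact absurd (lt_of_lt_of_le (by exact_mod_cast (show (1:ℕ) < 2 by norm_num) : (1:ℕ∞) < 2) this) (lt_irrefl _)

lemma compl_ssub_spanning (hT : Circuit M✶ Tstar) (hS : S ⊂ Tstar) :
    eRk M (M.E \ S) = eRk M M.E := by
  have hind : M✶.Indep S := hT.2 S hS
  obtain ⟨_, B, hB, hdisj⟩ := Matroid.dual_indep_iff_exists'.1 hind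
  refine le_antisymm (eRk_le_ground M _) ?_
  rw [base_eRk hB]
  exact le_eRk_of_indep hB.indep (fun z hz => ⟨hB.subset_ground hz, fun hzS =>
    (disjoint_right.1 hdisj hz) hzS⟩)

lemma hyperplane_lt (hT : Circuit M✶ Tstar) (hfin : eRk M M.E ≠ ⊤) :
    eRk M (M.E \ Tstar) + 1 ≤ eRk M M.E := by
  have hne : eRk M (M.E \ Tstar) ≠ eRk M M.E := by
    intro heq
    obtain ⟨I, hI⟩ := M.exists_isBasis' (M.E \ Tstar)
    obtain ⟨B, hB, hIB⟩ := hI.indep.exists_isBase_superset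
    have hIenc : I.encard = B.encard := by
      rw [← eRk_eq_encard_of_basis' hI, heq, base_eRk hB]
    have hBfin : B.Finite := Set.encard_ne_top_iff.1 (by rw [← base_eRk hB]; exact hfin)
    have hIB' : I = B := hBfin.eq_of_subset_of_encard_le' hIB hIenc.ge
    refine hT.1.not_indep (Matroid.dual_indep_iff_exists'.2 ⟨hT.1.2, B, hB, ?_⟩)
    exact disjoint_right.2 fun z hz => ((hIB' ▸ hI.subset) hz).2
  exact ENat.add_one_le_iff (ne_top_of_ground hfin _) |>.2
    (lt_of_le_of_ne (eRk_le_ground M _) hne)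

lemma flatfact (hT : Circuit M✶ Tstar) (hfin : eRk M M.E ≠ ⊤)
    (hS : S ⊆ M.E \ Tstar) (hd : d ∈ Tstar) (h : eRk M (insert d S) ≤ eRk M S) : False := by
  have hdE : d ∈ M.E := hT.1.2 hd
  have habs : eRk M (insert d (M.E \ Tstar)) ≤ eRk M (M.E \ Tstar) :=
    absorb hS h (ne_top_of_ground hfin _)
  have hset : insert d (M.E \ Tstar) = M.E \ (Tstar \ {d}) := by
    ext z
    simp only [mem_insert_iff, mem_diff, mem_singleton_iff]
    constructor
    · rintro (rfl | ⟨h1, h2⟩)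
      · exact ⟨hdE, fun hh => hh.2 rfl⟩
      · exact ⟨h1, fun hh => h2 hh.1⟩
    · rintro ⟨h1, h2⟩
      by_cases hzT : z ∈ Tstar
      · exact Or.inl (by_contra fun hne => h2 ⟨hzT, hne⟩)
      · exact Or.inr ⟨h1, hzT⟩
  rw [hset, compl_ssub_spanning hT (sdiff_singleton_ssubset.2 hd)] at habs
  have := (hyperplane_lt hT hfin).trans habs
  exact absurd ((ENat.add_one_le_iff (ne_top_of_ground hfin _)).1 this) (lt_irrefl _)

lemma orth (hT : Circuit M✶ Tstar) (hfin : eRk M M.E ≠ ⊤)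
    (hC : Circuit M C) (hcap : C ∩ Tstar = {d}) : False := by
  have hdCT : d ∈ C ∩ Tstar := by rw [hcap]; rfl
  have hdC : d ∈ C := hdCT.1
  refine flatfact hT hfin (S := C \ {d}) (fun z hz => ⟨hC.1.2 hz.1, fun hzT => ?_⟩)
    hdCT.2 ?_
  · exact hz.2 (show z ∈ ({d} : Set α) from hcap ▸ (⟨hz.1, hzT⟩ : z ∈ C ∩ Tstar))
  · have : insert d (C \ {d}) = C := by
      rw [insert_diff_singleton, insert_eq_of_mem hdC]
    rw [this, circuit_er_diff' hC hdC]

lemma fan_contra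
    (hnofan : ¬ ∃ C C' : Set α, Circuit M C ∧ Circuit M✶ C' ∧
      C.encard = 3 ∧ C'.encard = 3 ∧ (C ∪ C').encard = 4 ∧ Tstar ⊆ C ∪ C')
    (hT : Circuit M✶ Tstar) (hT3 : Tstar.encard = 3)
    {d d' w : α} (hwT : w ∉ Tstar) (hd : d ∈ Tstar) (hd' : d' ∈ Tstar) (hdd' : d ≠ d')
    (hC : Circuit M {d, d', w}) : False := by
  have hwd : w ≠ d := fun h => hwT (h ▸ hd)
  have hwd' : w ≠ d' := fun h => hwT (h ▸ hd')
  have henc3 : ({d, d', w} : Set α).encard = 3 := by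
    rw [encard_insert_of_notMem (by simp [hdd', Ne.symm hwd]),
      encard_pair (Ne.symm hwd')]
    norm_num
  have hunion : ({d, d', w} : Set α) ∪ Tstar = insert w Tstar := by
    ext z
    simp only [mem_union, mem_insert_iff, mem_singleton_iff]
    constructor
    · rintro ((rfl | rfl | rfl) | h) <;> tauto
    · rintro (rfl | h) <;> tauto
  refine hnofan ⟨{d, d', w}, Tstar, hC, hT, henc3, hT3, ?_, hunion ▸ subset_union_right⟩
  rw [hunion, encard_insert_of_notMem hwT, hT3]
  norm_num

lemma circuit4 (h3 : NConnected M 3) (hfin : eRk M M.E ≠ ⊤) (hE4 : 4 ≤ M.E.encard)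
    (hnofan : ¬ ∃ C C' : Set α, Circuit M C ∧ Circuit M✶ C' ∧
      C.encard = 3 ∧ C'.encard = 3 ∧ (C ∪ C').encard = 4 ∧ Tstar ⊆ C ∪ C')
    (hT : Circuit M✶ Tstar) (hT3 : Tstar.encard = 3)
    {d d' p q : α} (hd : d ∈ Tstar) (hd' : d' ∈ Tstar) (hdd' : d ≠ d')
    (hp : p ∈ M.E) (hq : q ∈ M.E) (hpT : p ∉ Tstar) (hqT : q ∉ Tstar) (hpq : p ≠ q)
    (hrk : eRk M {d, d', p, q} ≤ 3) : Circuit M {d, d', p, q} := by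
  have hpd : p ≠ d := fun h => hpT (h ▸ hd)
  have hpd' : p ≠ d' := fun h => hpT (h ▸ hd')
  have hqd : q ≠ d := fun h => hqT (h ▸ hd)
  have hqd' : q ≠ d' := fun h => hqT (h ▸ hd')
  have henc : ({d, d', p, q} : Set α).encard = 4 := by
    rw [encard_insert_of_notMem (by simp [hdd', Ne.symm hpd, Ne.symm hqd]),
      encard_insert_of_notMem (by simp [Ne.symm hpd', Ne.symm hqd']),
      encard_pair hpq]
    norm_num
  have hSE : ({d, d', p, q} : Set α) ⊆ M.E := by
    intro z hz
    rcases hz with rfl | rfl | rfl | rfl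
    · exact hT.1.2 hd
    · exact hT.1.2 hd'
    · exact hp
    · exact hq
  have hdep : M.Dep {d, d', p, q} := dep_of_eRk_lt_encard hSE (by
    rw [henc]; exact lt_of_le_of_lt hrk (by norm_num))
  obtain ⟨C, hCsub, hC⟩ := exists_circuit_of_dep (Set.toFinite _) hdep
  have hC3 : 3 ≤ C.encard := smallcirc h3 hfin hE4 hC
  have hdmem : ∀ y y' : α, ({d, d', p, q} : Set α) = {y, y', p, q} → y ∈ Tstar → y' ∈ Tstar →
      y' ∉ C → False := by
    intro y y' hSeq hy hy' hy'C
    have hyC : y ∈ C := by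
      by_contra hyC
      have hCpq : C ⊆ {p, q} := by
        intro z hz
        have := hCsub hz
        rw [hSeq] at this
        rcases this with rfl | rfl | h
        · exact absurd hz hyC
        · exact absurd hz hy'C
        · exact h
      have := hC3.trans (encard_mono hCpq)
      rw [encard_pair hpq] at this
      exact absurd this (by norm_num)
    refine orth hT hfin hC (d := y) ?_
    ext z
    simp only [mem_inter_iff, mem_singleton_iff]
    constructor
    · rintro ⟨hzC, hzT⟩
      have := hCsub hzC
      rw [hSeq] at this
      rcases this with rfl | rfl | rfl | rfl
      · rfl
      · exact absurd hzC hy'C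
      · exact absurd hzT hpT
      · exact absurd hzT hqT
    · rintro rfl
      exact ⟨hyC, hy⟩
  have hdC : d ∈ C := by
    by_contra hdC
    exact hdmem d' d (by ext z; simp; tauto) hd' hd hdC
  have hd'C : d' ∈ C := by
    by_contra hd'C
    exact hdmem d d' rfl hd hd' hd'C
  have hpC : p ∈ C := by
    by_contra hpC
    have hCsub' : C ⊆ {d, d', q} := by
      intro z hz
      have := hCsub hz
      rcases this with rfl | rfl | rfl | rfl
      · exact Or.inl rfl
      · exact Or.inr (Or.inl rfl)
      · exact absurd hz hpC
      · exact Or.inr (Or.inr rfl)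
    have hCeq : C = {d, d', q} := by
      refine (Finite.eq_of_subset_of_encard_le' (Set.toFinite _) hCsub' ?_)
      rw [encard_insert_of_notMem (by simp [hdd', Ne.symm hqd]), encard_pair (Ne.symm hqd')]
      exact le_trans (by norm_num) hC3
    exact absurd (fan_contra hnofan hT hT3 hqT hd hd' hdd' (hCeq ▸ hC)) not_false
  have hqC : q ∈ C := by
    by_contra hqC
    have hCsub' : C ⊆ {d, d', p} := by
      intro z hz
      have := hCsub hz
      rcases this with rfl | rfl | rfl | rfl
      · exact Or.inl rfl
      · exact Or.inr (Or.inl rfl)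
      · exact Or.inr (Or.inr rfl)
      · exact absurd hz hqC
    have hCeq : C = {d, d', p} := by
      refine (Finite.eq_of_subset_of_encard_le' (Set.toFinite _) hCsub' ?_)
      rw [encard_insert_of_notMem (by simp [hdd', Ne.symm hpd]), encard_pair (Ne.symm hpd')]
      exact le_trans (by norm_num) hC3
    exact absurd (fan_contra hnofan hT hT3 hpT hd hd' hdd' (hCeq ▸ hC)) not_false
  have hCeq : C = {d, d', p, q} := Subset.antisymm hCsub
    (insert_subset hdC (insert_subset hd'C (insert_subset hpC (singleton_subset_iff.2 hqC))))
  exact hCeq ▸ hC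

lemma nonloop (h3 : NConnected M 3) (hfin : eRk M M.E ≠ ⊤) (hE4 : 4 ≤ M.E.encard)
    (hx : x ∈ M.E) : M.Indep {x} := by
  by_contra hnot
  obtain ⟨C, hCsub, hC⟩ := exists_circuit_of_dep (Set.toFinite _)
    ⟨hnot, singleton_subset_iff.2 hx⟩
  have := (smallcirc h3 hfin hE4 hC).trans (encard_mono hCsub)
  rw [encard_singleton] at this
  exact absurd this (by norm_num)


lemma enat_ge_two_of {e : ℕ∞} (h : (3:ℕ∞) ≤ e + 1) : 2 ≤ e := by
  by_cases ht : e = ⊤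
  · rw [ht]; exact le_top
  · obtain ⟨n, hn⟩ := exists_nat_cast_eq ht
    rw [← hn] at h ⊢
    have h' : (3:ℕ) ≤ n + 1 := by exact_mod_cast h
    have : (2:ℕ) ≤ n := by omega
    exact_mod_cast this

lemma enat_le_one_of_lt_two {e : ℕ∞} (h : ¬ (2:ℕ∞) ≤ e) : e ≤ 1 := by
  push_neg at h
  exact Order.le_of_lt_add_one (by exact_mod_cast h)

lemma SEP (h3 : NConnected M 3) (hfin : eRk M M.E ≠ ⊤) (hE4 : 4 ≤ M.E.encard)
    (hnofan : ¬ ∃ C C' : Set α, Circuit M C ∧ Circuit M✶ C' ∧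
      C.encard = 3 ∧ C'.encard = 3 ∧ (C ∪ C').encard = 4 ∧ Tstar ⊆ C ∪ C')
    (hT : Circuit M✶ Tstar) (hT3 : Tstar.encard = 3)
    {x u v : α} (hx : x ∈ Tstar) (hu : u ∈ Tstar) (hv : v ∈ Tstar)
    (hxu : x ≠ u) (hxv : x ≠ v) (huv : u ≠ v)
    (hno : ¬ NConnected (con M {x}) 3) :
    ∃ X Y : Set α, X ∪ Y = M.E \ {x} ∧ Disjoint X Y ∧ u ∈ X ∧ v ∈ Y ∧
      eRk M (insert x X) = eRk M X ∧ eRk M (insert x Y) = eRk M Y ∧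
      eRk M X + eRk M Y = eRk M M.E + 2 ∧ 3 ≤ X.encard ∧ 3 ≤ Y.encard := by
  have hTE : Tstar ⊆ M.E := hT.1.2
  have hxE : x ∈ M.E := hTE hx
  have hxind : M.Indep {x} := nonloop h3 hfin hE4 hxE
  have hTfin : Tstar.Finite := Set.encard_ne_top_iff.1 (by rw [hT3]; exact (by norm_num))
  have hTeq : Tstar = {x, u, v} := by
    refine (Finite.eq_of_subset_of_encard_le' hTfin
      (insert_subset hx (insert_subset hu (singleton_subset_iff.2 hv))) ?_).symm
    rw [hT3, encard_insert_of_notMem (by simp [hxu, hxv]), encard_pair huv]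
    norm_num
  rw [NConnected] at hno
  push_neg at hno
  obtain ⟨k, hk0, hk3, W, hsep⟩ := hno
  obtain ⟨hWsub, hrk, hcard1, hcard2⟩ := hsep
  rw [con_ground] at hWsub hrk hcard2
  set X := W with hXdef
  set Y := (M.E \ {x}) \ X with hYdef
  have hXE : X ⊆ M.E \ {x} := hWsub
  have hYE : Y ⊆ M.E \ {x} := diff_subset
  have hXY : X ∪ Y = M.E \ {x} := union_diff_cancel hXE
  have hdisj : Disjoint X Y := disjoint_sdiff_right
  have hxX : x ∉ X := fun h => (hXE h).2 rfl
  have hxY : x ∉ Y := fun h => (hYE h).2 rfl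
  have e1 : eRk (con M {x}) X + 1 = eRk M (insert x X) := con_eRk hxind hXE
  have e2 : eRk (con M {x}) Y + 1 = eRk M (insert x Y) := con_eRk hxind hYE
  have e3 : eRk (con M {x}) (M.E \ {x}) + 1 = eRk M M.E := by
    rw [con_eRk hxind subset_rfl, insert_diff_singleton, insert_eq_of_mem hxE]
  -- translate the rank inequality
  have hrkM : eRk M (insert x X) + eRk M (insert x Y) ≤ eRk M M.E + k := by
    obtain ⟨nG, hnG⟩ := exists_nat_cast_eq hfin
    have hcXne : eRk (con M {x}) X ≠ ⊤ := fun h => (ne_top_of_ground hfin (insert x X))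
      (by rw [← e1, h]; rfl)
    have hcYne : eRk (con M {x}) Y ≠ ⊤ := fun h => (ne_top_of_ground hfin (insert x Y))
      (by rw [← e2, h]; rfl)
    have hcGne : eRk (con M {x}) (M.E \ {x}) ≠ ⊤ := fun h => hfin (by rw [← e3, h]; rfl)
    obtain ⟨nX, hnX⟩ := exists_nat_cast_eq hcXne
    obtain ⟨nY, hnY⟩ := exists_nat_cast_eq hcYne
    obtain ⟨nGc, hnGc⟩ := exists_nat_cast_eq hcGne
    rw [← hnX] at e1 hrk
    rw [← hnY] at e2 hrk
    rw [← hnGc] at e3 hrk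
    rw [← hnG] at e3
    rw [← e1, ← e2, ← hnG]
    have hnat : nGc + 1 = nG := by exact_mod_cast e3
    have hrknat : nX + nY ≤ nGc + (k - 1) := by exact_mod_cast hrk
    have : nX + 1 + (nY + 1) ≤ nG + k := by omega
    exact_mod_cast this
  have hmonoX : eRk M X ≤ eRk M (insert x X) := eRk_mono (subset_insert _ _)
  have hmonoY : eRk M Y ≤ eRk M (insert x Y) := eRk_mono (subset_insert _ _)
  have idX : M.E \ X = insert x Y := by
    ext z
    constructor
    · rintro ⟨hzE, hzX⟩
      rcases eq_or_ne z x with rfl | hne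
      · exact mem_insert _ _
      · have : z ∈ X ∪ Y := hXY ▸ ⟨hzE, hne⟩
        exact mem_insert_of_mem _ (this.resolve_left hzX)
    · rintro (rfl | hz)
      · exact ⟨hxE, hxX⟩
      · exact ⟨(hYE hz).1, disjoint_right.1 hdisj hz⟩
  have idY : M.E \ Y = insert x X := by
    ext z
    constructor
    · rintro ⟨hzE, hzY⟩
      rcases eq_or_ne z x with rfl | hne
      · exact mem_insert _ _
      · have : z ∈ X ∪ Y := hXY ▸ ⟨hzE, hne⟩
        exact mem_insert_of_mem _ (this.resolve_right hzY)
    · rintro (rfl | hz)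
      · exact ⟨hxE, hxY⟩
      · exact ⟨(hXE hz).1, disjoint_left.1 hdisj hz⟩
  have hXsubE : X ⊆ M.E := fun z hz => (hXE hz).1
  have hYsubE : Y ⊆ M.E := fun z hz => (hYE hz).1
  -- pair rank bound
  have pairbound : ∀ d : α, d ∈ M.E → d ≠ x → 2 ≤ eRk M {x, d} := by
    intro d hdE hdx
    by_contra hlt
    push_neg at hlt
    have hdep : M.Dep {x, d} := dep_of_eRk_lt_encard
      (insert_subset hxE (singleton_subset_iff.2 hdE))
      (by rw [encard_pair (Ne.symm hdx)]; exact hlt)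
    obtain ⟨C, hCsub, hC⟩ := exists_circuit_of_dep (Set.toFinite _) hdep
    have := (smallcirc h3 hfin hE4 hC).trans (encard_mono hCsub)
    rw [encard_pair (Ne.symm hdx)] at this
    exact absurd this (by norm_num)
  -- dispatch k = 1
  interval_cases k
  · exfalso
    by_cases hX2 : 2 ≤ X.encard
    · by_cases hY2 : 2 ≤ Y.encard
      · have hiY2 : 2 ≤ (insert x Y).encard :=
          hY2.trans (encard_mono (subset_insert _ _))
        have hsep2 := sep_lb h3 hfin zero_lt_two (by norm_num) hXsubE idX.symm
          (by exact_mod_cast hX2) (by exact_mod_cast hiY2)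
        obtain ⟨nE, hnE⟩ := exists_nat_cast_eq hfin
        obtain ⟨nX, hnX⟩ := exists_nat_cast_eq (ne_top_of_ground hfin X)
        obtain ⟨niX, hniX⟩ := exists_nat_cast_eq (ne_top_of_ground hfin (insert x X))
        obtain ⟨niY, hniY⟩ := exists_nat_cast_eq (ne_top_of_ground hfin (insert x Y))
        rw [← hnE, ← hnX, ← hniY] at hsep2
        rw [← hniX, ← hniY, ← hnE] at hrkM
        rw [← hnX, ← hniX] at hmonoX
        have q1 : nE + 2 ≤ nX + niY := by exact_mod_cast hsep2
        have q2 : niX + niY ≤ nE + 1 := by exact_mod_cast hrkM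
        have q3 : nX ≤ niX := by exact_mod_cast hmonoX
        omega
      · -- |Y| = 1
        push_neg at hY2
        have hY1 : Y.encard = 1 := le_antisymm (Order.le_of_lt_add_one (by exact_mod_cast hY2))
          hcard2
        obtain ⟨d, hd⟩ := encard_eq_one.1 hY1
        have hdE : d ∈ M.E := hYsubE (hd ▸ rfl)
        have hdx : d ≠ x := fun h => hxY (h ▸ (hd ▸ rfl : d ∈ Y))
        have hiY : insert x Y = {x, d} := by rw [hd]
        have hiX : insert x X = M.E \ {d} := by rw [← idY, hd]
        have hpb := pairbound d hdE hdx
        have hsep1 := sep_lb h3 hfin one_pos (by norm_num)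
          (singleton_subset_iff.2 hdE) rfl
          (by rw [encard_singleton]; exact_mod_cast le_rfl)
          (by
            have h2' : (2:ℕ∞) ≤ (M.E \ {d}).encard := small_compl hE4
              (by rw [encard_singleton]; norm_num)
            exact le_trans (by norm_num) h2')
        have hrd : eRk M {d} ≤ 1 := (eRk_le_encard M _).trans (by rw [encard_singleton])
        rw [hiY] at hrkM
        rw [hiX] at hrkM
        obtain ⟨nE, hnE⟩ := exists_nat_cast_eq hfin
        obtain ⟨npr, hnpr⟩ := exists_nat_cast_eq (ne_top_of_ground hfin {x, d})
        obtain ⟨ncd, hncd⟩ := exists_nat_cast_eq (ne_top_of_ground hfin (M.E \ {d}))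
        obtain ⟨nd, hnd⟩ := exists_nat_cast_eq (ne_top_of_ground hfin {d})
        rw [← hnE, ← hnpr, ← hncd] at hrkM
        rw [← hnpr] at hpb
        rw [← hnE, ← hnd, ← hncd] at hsep1
        rw [← hnd] at hrd
        have q1 : ncd + npr ≤ nE + 1 := by exact_mod_cast hrkM
        have q2 : 2 ≤ npr := by exact_mod_cast hpb
        have q3 : nE + 1 ≤ nd + ncd := by exact_mod_cast hsep1
        have q4 : nd ≤ 1 := by exact_mod_cast hrd
        omega
    · -- |X| = 1
      push_neg at hX2
      have hX1 : X.encard = 1 := le_antisymm (Order.le_of_lt_add_one (by exact_mod_cast hX2))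
        hcard1
      obtain ⟨d, hd⟩ := encard_eq_one.1 hX1
      have hdE : d ∈ M.E := hXsubE (hd ▸ rfl)
      have hdx : d ≠ x := fun h => hxX (h ▸ (hd ▸ rfl : d ∈ X))
      have hiX : insert x X = {x, d} := by rw [hd]
      have hiY : insert x Y = M.E \ {d} := by rw [← idX, hd]
      have hpb := pairbound d hdE hdx
      have hsep1 := sep_lb h3 hfin one_pos (by norm_num)
        (singleton_subset_iff.2 hdE) rfl
        (by rw [encard_singleton]; exact_mod_cast le_rfl)
        (by
          have h2' : (2:ℕ∞) ≤ (M.E \ {d}).encard := small_compl hE4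
            (by rw [encard_singleton]; norm_num)
          exact le_trans (by norm_num) h2')
      have hrd : eRk M {d} ≤ 1 := (eRk_le_encard M _).trans (by rw [encard_singleton])
      rw [hiY, hiX] at hrkM
      obtain ⟨nE, hnE⟩ := exists_nat_cast_eq hfin
      obtain ⟨npr, hnpr⟩ := exists_nat_cast_eq (ne_top_of_ground hfin {x, d})
      obtain ⟨ncd, hncd⟩ := exists_nat_cast_eq (ne_top_of_ground hfin (M.E \ {d}))
      obtain ⟨nd, hnd⟩ := exists_nat_cast_eq (ne_top_of_ground hfin {d})
      rw [← hnE, ← hnpr, ← hncd] at hrkM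
      rw [← hnpr] at hpb
      rw [← hnE, ← hnd, ← hncd] at hsep1
      rw [← hnd] at hrd
      have q1 : npr + ncd ≤ nE + 1 := by exact_mod_cast hrkM
      have q2 : 2 ≤ npr := by exact_mod_cast hpb
      have q3 : nE + 1 ≤ nd + ncd := by exact_mod_cast hsep1
      have q4 : nd ≤ 1 := by exact_mod_cast hrd
      omega
  · -- k = 2
    have hX2 : (2:ℕ∞) ≤ X.encard := by exact_mod_cast hcard1
    have hY2 : (2:ℕ∞) ≤ Y.encard := by exact_mod_cast hcard2
    have hiY2 : 2 ≤ (insert x Y).encard := hY2.trans (encard_mono (subset_insert _ _))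
    have hiX2 : 2 ≤ (insert x X).encard := hX2.trans (encard_mono (subset_insert _ _))
    have two2X := sep_lb h3 hfin zero_lt_two (by norm_num) hXsubE idX.symm hX2 hiY2
    have two2Y := sep_lb h3 hfin zero_lt_two (by norm_num) hYsubE idY.symm hY2 hiX2
    -- derive the equalities via lifting
    obtain ⟨nE, hnE⟩ := exists_nat_cast_eq hfin
    obtain ⟨nX, hnX⟩ := exists_nat_cast_eq (ne_top_of_ground hfin X)
    obtain ⟨nY, hnY⟩ := exists_nat_cast_eq (ne_top_of_ground hfin Y)
    obtain ⟨niX, hniX⟩ := exists_nat_cast_eq (ne_top_of_ground hfin (insert x X))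
    obtain ⟨niY, hniY⟩ := exists_nat_cast_eq (ne_top_of_ground hfin (insert x Y))
    have q1 : nE + 2 ≤ nX + niY := by
      rw [← hnE, ← hnX, ← hniY] at two2X; exact_mod_cast two2X
    have q2 : nE + 2 ≤ nY + niX := by
      rw [← hnE, ← hnY, ← hniX] at two2Y; exact_mod_cast two2Y
    have q3 : niX + niY ≤ nE + 2 := by
      rw [← hnE, ← hniX, ← hniY] at hrkM; exact_mod_cast hrkM
    have q4 : nX ≤ niX := by rw [← hnX, ← hniX] at hmonoX; exact_mod_cast hmonoX
    have q5 : nY ≤ niY := by rw [← hnY, ← hniY] at hmonoY; exact_mod_cast hmonoY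
    have eXn : niX = nX := by omega
    have eYn : niY = nY := by omega
    have eSum : nX + nY = nE + 2 := by omega
    have eX : eRk M (insert x X) = eRk M X := by rw [← hnX, ← hniX]; exact_mod_cast eXn
    have eY : eRk M (insert x Y) = eRk M Y := by rw [← hnY, ← hniY]; exact_mod_cast eYn
    have eSum' : eRk M X + eRk M Y = eRk M M.E + 2 := by
      rw [← hnX, ← hnY, ← hnE]
      exact_mod_cast eSum
    -- each side meets Tstar
    have meets : ∀ W' : Set α, W' ⊆ M.E \ {x} → eRk M (insert x W') = eRk M W' →
        (W' ∩ Tstar).Nonempty := by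
      intro W' hW'E heq
      by_contra hemp
      rw [not_nonempty_iff_eq_empty] at hemp
      refine flatfact hT hfin (S := W') (fun z hz => ⟨(hW'E hz).1, fun hzT => ?_⟩) hx heq.le
      have hzin : z ∈ W' ∩ Tstar := ⟨hz, hzT⟩
      rw [hemp] at hzin
      exact notMem_empty z hzin
    obtain ⟨w1, hw1⟩ := meets X hXE eX
    obtain ⟨w2, hw2⟩ := meets Y hYE eY
    have hw1uv : w1 = u ∨ w1 = v := by
      have := hTeq ▸ hw1.2
      rcases this with rfl | rfl | rfl
      · exact absurd hw1.1 hxX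
      · exact Or.inl rfl
      · exact Or.inr rfl
    have hw2uv : w2 = u ∨ w2 = v := by
      have := hTeq ▸ hw2.2
      rcases this with rfl | rfl | rfl
      · exact absurd hw2.1 hxY
      · exact Or.inl rfl
      · exact Or.inr rfl
    have hw12 : w1 ≠ w2 := fun h => disjoint_left.1 hdisj hw1.1 (h ▸ hw2.1)
    -- side size ≥ 3
    have side3 : ∀ (W' : Set α) (w' : α), W' ⊆ M.E \ {x} → w' ∈ W' → w' ∈ Tstar →
        eRk M (insert x W') = eRk M W' → (W' ∩ Tstar) ⊆ {w'} → 2 ≤ W'.encard →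
        3 ≤ W'.encard := by
      intro W' w' hW'E hw'W hw'T heq hcap h2
      by_contra hlt
      push_neg at hlt
      have h2' : W'.encard = 2 := le_antisymm (Order.le_of_lt_add_one (by exact_mod_cast hlt)) h2
      obtain ⟨c1, c2, hc12, hW'eq⟩ := encard_eq_two.1 h2'
      -- identify w' among c1 c2
      have hw'c : w' = c1 ∨ w' = c2 := by
        have := hW'eq ▸ hw'W
        rcases this with rfl | rfl
        · exact Or.inl rfl
        · exact Or.inr rfl
      obtain ⟨t, hteq, htW⟩ : ∃ t, W' = {w', t} ∧ t ∈ W' ∧ t ≠ w' := by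
        rcases hw'c with rfl | rfl
        · exact ⟨c2, hW'eq, hW'eq ▸ (by simp), Ne.symm hc12⟩
        · exact ⟨c1, by rw [hW'eq]; ext z; simp; tauto, hW'eq ▸ (by simp), hc12⟩
      obtain ⟨htW, htw'⟩ := htW
      have htT : t ∉ Tstar := fun h => htw' (by
        have := hcap ⟨htW, h⟩
        exact this)
      have htE : t ∈ M.E := (hW'E htW).1
      have hxw' : x ≠ w' := fun h => (hW'E hw'W).2 h.symm
      have hxt : x ≠ t := fun h => (hW'E htW).2 h.symm
      have hrk3 : eRk M (insert x W') ≤ 2 := by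
        rw [heq]
        exact (eRk_le_encard M _).trans (by rw [h2'])
      have hS3 : insert x W' = {x, w', t} := by rw [hteq]
      have hdep : M.Dep {x, w', t} := by
        refine dep_of_eRk_lt_encard ?_ ?_
        · exact insert_subset hxE (insert_subset (hTE hw'T) (singleton_subset_iff.2 htE))
        · rw [encard_insert_of_notMem (by simp [hxw', hxt]), encard_pair (Ne.symm htw')]
          refine lt_of_le_of_lt (hS3 ▸ hrk3) (by norm_num)
      obtain ⟨C, hCsub, hC⟩ := exists_circuit_of_dep (Set.toFinite _) hdep
      have hCeq : C = {x, w', t} := by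
        refine Finite.eq_of_subset_of_encard_le' (Set.toFinite _) hCsub ?_
        rw [encard_insert_of_notMem (by simp [hxw', hxt]), encard_pair (Ne.symm htw')]
        exact le_trans (by norm_num) (smallcirc h3 hfin hE4 hC)
      exact fan_contra hnofan hT hT3 htT hx hw'T hxw' (hCeq ▸ hC)
    have hsplit : (u ∈ X ∧ v ∈ Y) ∨ (v ∈ X ∧ u ∈ Y) := by
      rcases hw1uv with rfl | rfl
      · refine Or.inl ⟨hw1.1, ?_⟩
        rcases hw2uv with rfl | rfl
        · exact absurd rfl hw12
        · exact hw2.1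
      · refine Or.inr ⟨hw1.1, ?_⟩
        rcases hw2uv with rfl | rfl
        · exact hw2.1
        · exact absurd rfl hw12
    rcases hsplit with ⟨huX, hvY⟩ | ⟨hvX, huY⟩
    · have hcapX : X ∩ Tstar ⊆ {u} := by
        intro z hz
        have := hTeq ▸ hz.2
        rcases this with rfl | rfl | rfl
        · exact absurd hz.1 hxX
        · rfl
        · exact absurd hz.1 (fun h => disjoint_left.1 hdisj h hvY)
      have hcapY : Y ∩ Tstar ⊆ {v} := by
        intro z hz
        have := hTeq ▸ hz.2
        rcases this with rfl | rfl | rfl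
        · exact absurd hz.1 hxY
        · exact absurd hz.1 (fun h => disjoint_right.1 hdisj h huX)
        · rfl
      exact ⟨X, Y, hXY, hdisj, huX, hvY, eX, eY, eSum',
        side3 X u hXE huX hu eX hcapX hX2, side3 Y v hYE hvY hv eY hcapY hY2⟩
    · have hcapX : X ∩ Tstar ⊆ {v} := by
        intro z hz
        have := hTeq ▸ hz.2
        rcases this with rfl | rfl | rfl
        · exact absurd hz.1 hxX
        · exact absurd hz.1 (fun h => disjoint_left.1 hdisj h huY)
        · rfl
      have hcapY : Y ∩ Tstar ⊆ {u} := by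
        intro z hz
        have := hTeq ▸ hz.2
        rcases this with rfl | rfl | rfl
        · exact absurd hz.1 hxY
        · rfl
        · exact absurd hz.1 (fun h => disjoint_right.1 hdisj h hvX)
      exact ⟨Y, X, by rw [union_comm]; exact hXY, hdisj.symm, huY, hvX, eY, eX,
        by rw [add_comm]; exact eSum',
        side3 Y u hYE huY hu eY hcapY hY2, side3 X v hXE hvX hv eX hcapX hX2⟩

end TstarFacts

end PaperDefs

set_option maxHeartbeats 4000000 in
/-- If `T*` is a triad of a 3-connected matroid `M` with
`r*(M) ≥ 3`, and `T*` is contained in no 4-element fan of `M`, then for any two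
distinct `a, b ∈ T*`, one of `M / a` and `M / b` is 3-connected. -/
theorem statement_16 {α : Type*} (M : Matroid α) (Tstar : Set α) (a b : α)
    (h3 : NConnected M 3) (hcork : 3 ≤ eRk M✶ M.E)
    (hT : Circuit M✶ Tstar) (hTcard : Tstar.encard = 3)
    (hnofan : ¬ ∃ C C' : Set α, Circuit M C ∧ Circuit M✶ C' ∧
      C.encard = 3 ∧ C'.encard = 3 ∧ (C ∪ C').encard = 4 ∧ Tstar ⊆ C ∪ C')
    (ha : a ∈ Tstar) (hb : b ∈ Tstar) (hab : a ≠ b) :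
    NConnected (con M {a}) 3 ∨ NConnected (con M {b}) 3 := by
  by_contra hcon
  push_neg at hcon
  obtain ⟨hA, hB⟩ := hcon
  have hTE : Tstar ⊆ M.E := hT.1.2
  have haE : a ∈ M.E := hTE ha
  have hbE : b ∈ M.E := hTE hb
  have hTfin : Tstar.Finite := Set.encard_ne_top_iff.1 (by rw [hTcard]; norm_num)
  -- finiteness of rank
  have hfin : eRk M M.E ≠ ⊤ := by
    intro htop
    refine h3 1 one_pos (by norm_num) {a} ⟨singleton_subset_iff.2 haE, ?_, by simp, ?_⟩
    · rw [htop]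
      simp
    · have h1 : 1 ≤ (M.E \ {a}).encard :=
        Set.one_le_encard_iff_nonempty.2 ⟨b, hbE, fun h => hab (mem_singleton_iff.1 h).symm⟩
      exact_mod_cast h1
  -- |E| ≥ 4
  have hE4 : 4 ≤ M.E.encard := by
    have hgt : ¬ (eRk M✶ M.E ≤ 2) := fun hle => by
      have := hcork.trans hle
      norm_num at this
    have h2 : ∃ I, (M✶.Indep I ∧ I ⊆ M.E) ∧ 2 < I.encard := by
      by_contra hno
      push_neg at hno
      exact hgt (eRk_le_of fun I hI hIs => hno I ⟨hI, hIs⟩)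
    obtain ⟨I, ⟨hIind, hIE⟩, hI2⟩ := h2
    have hI3 : (3:ℕ∞) ≤ I.encard := Order.add_one_le_of_lt hI2
    have hne : M.E ≠ Tstar := by
      intro heq
      have hIT : I ⊆ Tstar := heq ▸ hIE
      have : I = Tstar := Finite.eq_of_subset_of_encard_le' hTfin hIT (by rw [hTcard]; exact hI3)
      exact hT.1.not_indep (this ▸ hIind)
    obtain ⟨w, hwE, hwT⟩ : ∃ w ∈ M.E, w ∉ Tstar := by
      by_contra hno
      push_neg at hno
      exact hne (Subset.antisymm (fun z hz => hno z hz) hTE)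
    calc (4:ℕ∞) = 3 + 1 := by norm_num
      _ = (insert w Tstar).encard := by rw [encard_insert_of_notMem hwT, hTcard]
      _ ≤ M.E.encard := encard_mono (insert_subset hwE hTE)
  -- third element c
  obtain ⟨c, hcT, hca, hcb⟩ : ∃ c ∈ Tstar, c ≠ a ∧ c ≠ b := by
    by_contra hno
    push_neg at hno
    have hsub : Tstar ⊆ {a, b} := fun z hz => by
      by_cases hza : z = a
      · exact Or.inl hza
      · exact Or.inr (hno z hz hza)
    have hle : (3:ℕ∞) ≤ 2 := by
      rw [← hTcard, ← encard_pair hab]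
      exact encard_mono hsub
    norm_num at hle
  have hcE : c ∈ M.E := hTE hcT
  have hTeq : Tstar = {a, b, c} := by
    refine (Finite.eq_of_subset_of_encard_le' hTfin
      (insert_subset ha (insert_subset hb (singleton_subset_iff.2 hcT))) ?_).symm
    rw [hTcard, encard_insert_of_notMem (by simp [hab, Ne.symm hca]),
      encard_pair (Ne.symm hcb)]
    norm_num
  -- apply SEP twice
  obtain ⟨X, Y, hXY, hdXY, hbX, hcY, eX, eY, eSumXY, hX3, hY3⟩ :=
    SEP h3 hfin hE4 hnofan hT hTcard ha hb hcT hab (Ne.symm hca) (Ne.symm hcb) hA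
  obtain ⟨U, V, hUV, hdUV, haU, hcV, eU, eV, eSumUV, hU3, hV3⟩ :=
    SEP h3 hfin hE4 hnofan hT hTcard hb ha hcT (Ne.symm hab) (Ne.symm hcb) (Ne.symm hca) hB
  -- basic membership facts
  have hXEa : X ⊆ M.E \ {a} := hXY ▸ subset_union_left
  have hYEa : Y ⊆ M.E \ {a} := hXY ▸ subset_union_right
  have hUEb : U ⊆ M.E \ {b} := hUV ▸ subset_union_left
  have hVEb : V ⊆ M.E \ {b} := hUV ▸ subset_union_right
  have hXE : X ⊆ M.E := fun z hz => (hXEa hz).1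
  have hYE : Y ⊆ M.E := fun z hz => (hYEa hz).1
  have hUE : U ⊆ M.E := fun z hz => (hUEb hz).1
  have hVE : V ⊆ M.E := fun z hz => (hVEb hz).1
  have haX : a ∉ X := fun h => (hXEa h).2 rfl
  have haY : a ∉ Y := fun h => (hYEa h).2 rfl
  have hbU : b ∉ U := fun h => (hUEb h).2 rfl
  have hbV : b ∉ V := fun h => (hVEb h).2 rfl
  have hbY : b ∉ Y := fun h => disjoint_left.1 hdXY hbX h
  have haV : a ∉ V := fun h => disjoint_left.1 hdUV haU h
  have hcX : c ∉ X := fun h => disjoint_left.1 hdXY h hcY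
  have hcU : c ∉ U := fun h => disjoint_left.1 hdUV h hcV
  have hzXY : ∀ z, z ∈ M.E → z ≠ a → z ∈ X ∨ z ∈ Y := fun z hz hza =>
    (hXY ▸ (⟨hz, hza⟩ : z ∈ M.E \ {a}) : z ∈ X ∪ Y)
  have hzUV : ∀ z, z ∈ M.E → z ≠ b → z ∈ U ∨ z ∈ V := fun z hz hzb =>
    (hUV ▸ (⟨hz, hzb⟩ : z ∈ M.E \ {b}) : z ∈ U ∪ V)
  have hcP4 : c ∈ Y ∩ V := ⟨hcY, hcV⟩
  -- quadrants in E \ Tstar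
  have hP1T : X ∩ U ⊆ M.E \ Tstar := by
    rintro z ⟨hzX, hzU⟩
    refine ⟨hXE hzX, fun hzT => ?_⟩
    rcases (hTeq ▸ hzT : z ∈ ({a,b,c} : Set α)) with rfl | rfl | rfl
    · exact haX hzX
    · exact hbU hzU
    · exact hcX hzX
  have hP2T : X ∩ V ⊆ M.E \ Tstar := by
    rintro z ⟨hzX, hzV⟩
    refine ⟨hXE hzX, fun hzT => ?_⟩
    rcases (hTeq ▸ hzT : z ∈ ({a,b,c} : Set α)) with rfl | rfl | rfl
    · exact haX hzX
    · exact hbV hzV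
    · exact hcX hzX
  have hP3T : Y ∩ U ⊆ M.E \ Tstar := by
    rintro z ⟨hzY, hzU⟩
    refine ⟨hYE hzY, fun hzT => ?_⟩
    rcases (hTeq ▸ hzT : z ∈ ({a,b,c} : Set α)) with rfl | rfl | rfl
    · exact haY hzY
    · exact hbU hzU
    · exact hcU hzU
  -- strictness lemmas from flat facts
  have strictP : ∀ (P : Set α) (d : α), P ⊆ M.E \ Tstar → d ∈ Tstar →
      eRk M P + 1 ≤ eRk M (insert d P) := by
    intro P d hPT hdT
    by_contra hlt
    push_neg at hlt
    have hle : eRk M (insert d P) ≤ eRk M P :=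
      Order.le_of_lt_add_one (by exact_mod_cast hlt)
    exact flatfact hT hfin hPT hdT hle
  -- complement sizes
  have compl_ab : ∀ P : Set α, a ∉ P → b ∉ P → 2 ≤ (M.E \ P).encard := by
    intro P haP hbP
    rw [← encard_pair hab]
    exact encard_mono (insert_subset ⟨haE, haP⟩ (singleton_subset_iff.2 ⟨hbE, hbP⟩))
  -- QUADMAIN : P1 and P4 both large is impossible
  have QUADMAIN : ¬ (2 ≤ (X ∩ U).encard ∧ 2 ≤ (Y ∩ V).encard) := by
    rintro ⟨hP1big, hP4big⟩
    have id1 : (insert a Y) ∪ (insert b V) = M.E \ (X ∩ U) := by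
      ext z
      constructor
      · rintro (h | h) <;> rcases h with rfl | h
        · exact ⟨haE, fun hP => haX hP.1⟩
        · exact ⟨hYE h, fun hP => disjoint_left.1 hdXY hP.1 h⟩
        · exact ⟨hbE, fun hP => hbU hP.2⟩
        · exact ⟨hVE h, fun hP => disjoint_left.1 hdUV hP.2 h⟩
      · rintro ⟨hzE, hzP⟩
        by_cases hza : z = a
        · exact Or.inl (hza ▸ mem_insert _ _)
        by_cases hzb : z = b
        · exact Or.inr (hzb ▸ mem_insert _ _)
        rcases hzXY z hzE hza with hzX | hzY
        · rcases hzUV z hzE hzb with hzU | hzV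
          · exact absurd ⟨hzX, hzU⟩ hzP
          · exact Or.inr (mem_insert_of_mem _ hzV)
        · exact Or.inl (mem_insert_of_mem _ hzY)
    have id2 : (insert a Y) ∩ (insert b V) = Y ∩ V := by
      ext z
      constructor
      · rintro ⟨h1, h2⟩
        rcases h1 with rfl | h1
        · rcases h2 with rfl | h2
          · exact absurd rfl hab
          · exact absurd h2 haV
        · rcases h2 with rfl | h2
          · exact absurd h1 hbY
          · exact ⟨h1, h2⟩
      · rintro ⟨h1, h2⟩
        exact ⟨mem_insert_of_mem _ h1, mem_insert_of_mem _ h2⟩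
    have id3 : (insert a X) ∪ (insert b U) = M.E \ (Y ∩ V) := by
      ext z
      constructor
      · rintro (h | h) <;> rcases h with rfl | h
        · exact ⟨haE, fun hP => haY hP.1⟩
        · exact ⟨hXE h, fun hP => disjoint_left.1 hdXY h hP.1⟩
        · exact ⟨hbE, fun hP => hbV hP.2⟩
        · exact ⟨hUE h, fun hP => disjoint_left.1 hdUV h hP.2⟩
      · rintro ⟨hzE, hzP⟩
        by_cases hza : z = a
        · exact Or.inl (hza ▸ mem_insert _ _)
        by_cases hzb : z = b
        · exact Or.inr (hzb ▸ mem_insert _ _)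
        rcases hzXY z hzE hza with hzX | hzY
        · exact Or.inl (mem_insert_of_mem _ hzX)
        · rcases hzUV z hzE hzb with hzU | hzV
          · exact Or.inr (mem_insert_of_mem _ hzU)
          · exact absurd ⟨hzY, hzV⟩ hzP
    have id4 : (insert a X) ∩ (insert b U) = insert a (insert b (X ∩ U)) := by
      ext z
      constructor
      · rintro ⟨h1, h2⟩
        rcases h1 with rfl | h1
        · exact mem_insert _ _
        · rcases h2 with rfl | h2
          · exact mem_insert_of_mem _ (mem_insert _ _)
          · exact mem_insert_of_mem _ (mem_insert_of_mem _ ⟨h1, h2⟩)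
      · rintro (rfl | rfl | ⟨h1, h2⟩)
        · exact ⟨mem_insert _ _, mem_insert_of_mem _ haU⟩
        · exact ⟨mem_insert_of_mem _ hbX, mem_insert _ _⟩
        · exact ⟨mem_insert_of_mem _ h1, mem_insert_of_mem _ h2⟩
    have sub1 := eRk_submod M (insert a Y) (insert b V)
    rw [id1, id2, eY, eV] at sub1
    have sub2 := eRk_submod M (insert a X) (insert b U)
    rw [id3, id4, eX, eU] at sub2
    have two2P1 := sep_lb h3 hfin zero_lt_two (by norm_num)
      ((inter_subset_left).trans hXE) rfl hP1big
      (compl_ab _ (fun h => haX h.1) (fun h => hbU h.2))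
    have two2P4 := sep_lb h3 hfin zero_lt_two (by norm_num)
      ((inter_subset_left).trans hYE) rfl hP4big
      (compl_ab _ (fun h => haY h.1) (fun h => hbV h.2))
    have strict1 : eRk M (X ∩ U) + 1 ≤ eRk M (insert a (insert b (X ∩ U))) :=
      (strictP (X ∩ U) a hP1T ha).trans
        (eRk_mono (insert_subset_insert (subset_insert _ _)))
    obtain ⟨nE, hnE⟩ := exists_nat_cast_eq hfin
    obtain ⟨nX, hnX⟩ := exists_nat_cast_eq (ne_top_of_ground hfin X)
    obtain ⟨nY, hnY⟩ := exists_nat_cast_eq (ne_top_of_ground hfin Y)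
    obtain ⟨nU, hnU⟩ := exists_nat_cast_eq (ne_top_of_ground hfin U)
    obtain ⟨nV, hnV⟩ := exists_nat_cast_eq (ne_top_of_ground hfin V)
    obtain ⟨nP1, hnP1⟩ := exists_nat_cast_eq (ne_top_of_ground hfin (X ∩ U))
    obtain ⟨nP4, hnP4⟩ := exists_nat_cast_eq (ne_top_of_ground hfin (Y ∩ V))
    obtain ⟨nc1, hnc1⟩ := exists_nat_cast_eq (ne_top_of_ground hfin (M.E \ (X ∩ U)))
    obtain ⟨nc4, hnc4⟩ := exists_nat_cast_eq (ne_top_of_ground hfin (M.E \ (Y ∩ V)))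
    obtain ⟨nbig, hnbig⟩ := exists_nat_cast_eq
      (ne_top_of_ground hfin (insert a (insert b (X ∩ U))))
    rw [← hnY, ← hnV, ← hnc1, ← hnP4] at sub1
    rw [← hnX, ← hnU, ← hnc4, ← hnbig] at sub2
    rw [← hnE, ← hnP1, ← hnc1] at two2P1
    rw [← hnE, ← hnP4, ← hnc4] at two2P4
    rw [← hnP1, ← hnbig] at strict1
    rw [← hnX, ← hnY, ← hnE] at eSumXY
    rw [← hnU, ← hnV, ← hnE] at eSumUV
    have q1 : nc1 + nP4 ≤ nY + nV := by exact_mod_cast sub1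
    have q2 : nc4 + nbig ≤ nX + nU := by exact_mod_cast sub2
    have q3 : nE + 2 ≤ nP1 + nc1 := by exact_mod_cast two2P1
    have q4 : nE + 2 ≤ nP4 + nc4 := by exact_mod_cast two2P4
    have q5 : nP1 + 1 ≤ nbig := by exact_mod_cast strict1
    have q6 : nX + nY = nE + 2 := by exact_mod_cast eSumXY
    have q7 : nU + nV = nE + 2 := by exact_mod_cast eSumUV
    omega
  -- QUAD2 : P2 and P3 both large is impossible
  have QUAD2 : ¬ (2 ≤ (X ∩ V).encard ∧ 2 ≤ (Y ∩ U).encard) := by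
    rintro ⟨hP2big, hP3big⟩
    have id5 : (insert a X) ∪ (insert b V) = M.E \ (Y ∩ U) := by
      ext z
      constructor
      · rintro (h | h) <;> rcases h with rfl | h
        · exact ⟨haE, fun hP => haY hP.1⟩
        · exact ⟨hXE h, fun hP => disjoint_left.1 hdXY h hP.1⟩
        · exact ⟨hbE, fun hP => hbU hP.2⟩
        · exact ⟨hVE h, fun hP => disjoint_left.1 hdUV hP.2 h⟩
      · rintro ⟨hzE, hzP⟩
        by_cases hza : z = a
        · exact Or.inl (hza ▸ mem_insert _ _)
        by_cases hzb : z = b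
        · exact Or.inr (hzb ▸ mem_insert _ _)
        rcases hzXY z hzE hza with hzX | hzY
        · exact Or.inl (mem_insert_of_mem _ hzX)
        · rcases hzUV z hzE hzb with hzU | hzV
          · exact absurd ⟨hzY, hzU⟩ hzP
          · exact Or.inr (mem_insert_of_mem _ hzV)
    have id6 : (insert a X) ∩ (insert b V) = insert b (X ∩ V) := by
      ext z
      constructor
      · rintro ⟨h1, h2⟩
        rcases h1 with rfl | h1
        · rcases h2 with rfl | h2
          · exact mem_insert _ _
          · exact absurd h2 haV
        · rcases h2 with rfl | h2
          · exact mem_insert _ _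
          · exact mem_insert_of_mem _ ⟨h1, h2⟩
      · rintro (rfl | ⟨h1, h2⟩)
        · exact ⟨mem_insert_of_mem _ hbX, mem_insert _ _⟩
        · exact ⟨mem_insert_of_mem _ h1, mem_insert_of_mem _ h2⟩
    have id7 : (insert a Y) ∪ (insert b U) = M.E \ (X ∩ V) := by
      ext z
      constructor
      · rintro (h | h) <;> rcases h with rfl | h
        · exact ⟨haE, fun hP => haX hP.1⟩
        · exact ⟨hYE h, fun hP => disjoint_left.1 hdXY hP.1 h⟩
        · exact ⟨hbE, fun hP => hbV hP.2⟩
        · exact ⟨hUE h, fun hP => disjoint_left.1 hdUV h hP.2⟩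
      · rintro ⟨hzE, hzP⟩
        by_cases hza : z = a
        · exact Or.inl (hza ▸ mem_insert _ _)
        by_cases hzb : z = b
        · exact Or.inr (hzb ▸ mem_insert _ _)
        rcases hzXY z hzE hza with hzX | hzY
        · rcases hzUV z hzE hzb with hzU | hzV
          · exact Or.inr (mem_insert_of_mem _ hzU)
          · exact absurd ⟨hzX, hzV⟩ hzP
        · exact Or.inl (mem_insert_of_mem _ hzY)
    have id8 : (insert a Y) ∩ (insert b U) = insert a (Y ∩ U) := by
      ext z
      constructor
      · rintro ⟨h1, h2⟩
        rcases h1 with rfl | h1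
        · exact mem_insert _ _
        · rcases h2 with rfl | h2
          · exact absurd h1 hbY
          · exact mem_insert_of_mem _ ⟨h1, h2⟩
      · rintro (rfl | ⟨h1, h2⟩)
        · exact ⟨mem_insert _ _, mem_insert_of_mem _ haU⟩
        · exact ⟨mem_insert_of_mem _ h1, mem_insert_of_mem _ h2⟩
    have sub5 := eRk_submod M (insert a X) (insert b V)
    rw [id5, id6, eX, eV] at sub5
    have sub7 := eRk_submod M (insert a Y) (insert b U)
    rw [id7, id8, eY, eU] at sub7
    have two2P2 := sep_lb h3 hfin zero_lt_two (by norm_num)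
      ((inter_subset_left).trans hXE) rfl hP2big
      (compl_ab _ (fun h => haX h.1) (fun h => hbV h.2))
    have two2P3 := sep_lb h3 hfin zero_lt_two (by norm_num)
      ((inter_subset_left).trans hYE) rfl hP3big
      (compl_ab _ (fun h => haY h.1) (fun h => hbU h.2))
    have strict2 : eRk M (X ∩ V) + 1 ≤ eRk M (insert b (X ∩ V)) := strictP _ b hP2T hb
    have strict3 : eRk M (Y ∩ U) + 1 ≤ eRk M (insert a (Y ∩ U)) := strictP _ a hP3T ha
    obtain ⟨nE, hnE⟩ := exists_nat_cast_eq hfin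
    obtain ⟨nX, hnX⟩ := exists_nat_cast_eq (ne_top_of_ground hfin X)
    obtain ⟨nY, hnY⟩ := exists_nat_cast_eq (ne_top_of_ground hfin Y)
    obtain ⟨nU, hnU⟩ := exists_nat_cast_eq (ne_top_of_ground hfin U)
    obtain ⟨nV, hnV⟩ := exists_nat_cast_eq (ne_top_of_ground hfin V)
    obtain ⟨nP2, hnP2⟩ := exists_nat_cast_eq (ne_top_of_ground hfin (X ∩ V))
    obtain ⟨nP3, hnP3⟩ := exists_nat_cast_eq (ne_top_of_ground hfin (Y ∩ U))
    obtain ⟨nc2, hnc2⟩ := exists_nat_cast_eq (ne_top_of_ground hfin (M.E \ (X ∩ V)))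
    obtain ⟨nc3, hnc3⟩ := exists_nat_cast_eq (ne_top_of_ground hfin (M.E \ (Y ∩ U)))
    obtain ⟨nib2, hnib2⟩ := exists_nat_cast_eq (ne_top_of_ground hfin (insert b (X ∩ V)))
    obtain ⟨nia3, hnia3⟩ := exists_nat_cast_eq (ne_top_of_ground hfin (insert a (Y ∩ U)))
    rw [← hnX, ← hnV, ← hnc3, ← hnib2] at sub5
    rw [← hnY, ← hnU, ← hnc2, ← hnia3] at sub7
    rw [← hnE, ← hnP2, ← hnc2] at two2P2
    rw [← hnE, ← hnP3, ← hnc3] at two2P3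
    rw [← hnP2, ← hnib2] at strict2
    rw [← hnP3, ← hnia3] at strict3
    rw [← hnX, ← hnY, ← hnE] at eSumXY
    rw [← hnU, ← hnV, ← hnE] at eSumUV
    have q1 : nc3 + nib2 ≤ nX + nV := by exact_mod_cast sub5
    have q2 : nc2 + nia3 ≤ nY + nU := by exact_mod_cast sub7
    have q3 : nE + 2 ≤ nP2 + nc2 := by exact_mod_cast two2P2
    have q4 : nE + 2 ≤ nP3 + nc3 := by exact_mod_cast two2P3
    have q5 : nP2 + 1 ≤ nib2 := by exact_mod_cast strict2
    have q6 : nP3 + 1 ≤ nia3 := by exact_mod_cast strict3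
    have q7 : nX + nY = nE + 2 := by exact_mod_cast eSumXY
    have q8 : nU + nV = nE + 2 := by exact_mod_cast eSumUV
    omega
  -- |Y ∩ V| ≥ 2
  have idYq : Y = (Y ∩ U) ∪ (Y ∩ V) := by
    ext z
    constructor
    · intro hz
      rcases hzUV z (hYE hz) (fun h => hbY (h ▸ hz)) with h | h
      · exact Or.inl ⟨hz, h⟩
      · exact Or.inr ⟨hz, h⟩
    · rintro (h | h)
      · exact h.1
      · exact h.1
  have idVq : V = (X ∩ V) ∪ (Y ∩ V) := by
    ext z
    constructor
    · intro hz
      rcases hzXY z (hVE hz) (fun h => haV (h ▸ hz)) with h | h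
      · exact Or.inl ⟨h, hz⟩
      · exact Or.inr ⟨h, hz⟩
    · rintro (h | h)
      · exact h.2
      · exact h.2
  have idXq : X = insert b ((X ∩ U) ∪ (X ∩ V)) := by
    ext z
    constructor
    · intro hz
      by_cases hzb : z = b
      · exact hzb ▸ mem_insert _ _
      rcases hzUV z (hXE hz) hzb with h | h
      · exact mem_insert_of_mem _ (Or.inl ⟨hz, h⟩)
      · exact mem_insert_of_mem _ (Or.inr ⟨hz, h⟩)
    · rintro (rfl | h)
      · exact hbX
      · rcases h with h | h
        · exact h.1
        · exact h.1
  have idUq : U = insert a ((X ∩ U) ∪ (Y ∩ U)) := by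
    ext z
    constructor
    · intro hz
      by_cases hza : z = a
      · exact hza ▸ mem_insert _ _
      rcases hzXY z (hUE hz) hza with h | h
      · exact mem_insert_of_mem _ (Or.inl ⟨h, hz⟩)
      · exact mem_insert_of_mem _ (Or.inr ⟨h, hz⟩)
    · rintro (rfl | h)
      · exact haU
      · rcases h with h | h
        · exact h.2
        · exact h.2
  have hP4big : 2 ≤ (Y ∩ V).encard := by
    by_contra hsmall
    have hle : (Y ∩ V).encard ≤ 1 := enat_le_one_of_lt_two hsmall
    have hP4c : Y ∩ V = {c} := Subset.antisymm
      (fun z hz => mem_singleton_iff.2 (Set.encard_le_one_iff.1 hle z c hz hcP4))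
      (singleton_subset_iff.2 hcP4)
    have hYenc : Y.encard = (Y ∩ U).encard + 1 := by
      conv_lhs => rw [idYq]
      rw [encard_union_eq (hdUV.mono inter_subset_right inter_subset_right), hP4c,
        encard_singleton]
    have hVenc : V.encard = (X ∩ V).encard + 1 := by
      conv_lhs => rw [idVq]
      rw [encard_union_eq (hdXY.mono inter_subset_left inter_subset_left), hP4c,
        encard_singleton]
    exact QUAD2 ⟨enat_ge_two_of (by rw [← hVenc]; exact hV3),
      enat_ge_two_of (by rw [← hYenc]; exact hY3)⟩
  have hP1small : (X ∩ U).encard ≤ 1 :=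
    enat_le_one_of_lt_two (fun h => QUADMAIN ⟨h, hP4big⟩)
  have hdisj12 : Disjoint (X ∩ U) (X ∩ V) := hdUV.mono inter_subset_right inter_subset_right
  have hdisj13 : Disjoint (X ∩ U) (Y ∩ U) := hdXY.mono inter_subset_left inter_subset_left
  have hXenc : X.encard = (X ∩ U).encard + (X ∩ V).encard + 1 := by
    conv_lhs => rw [idXq]
    rw [encard_insert_of_notMem (fun h => by
      rcases h with h | h
      · exact hbU h.2
      · exact hbV h.2), encard_union_eq hdisj12]
  have hUenc : U.encard = (X ∩ U).encard + (Y ∩ U).encard + 1 := by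
    conv_lhs => rw [idUq]
    rw [encard_insert_of_notMem (fun h => by
      rcases h with h | h
      · exact haX h.1
      · exact haY h.1), encard_union_eq hdisj13]
  have hP1ne : (X ∩ U).encard ≠ ⊤ := by
    intro h
    rw [h] at hP1small
    exact absurd hP1small (by simp)
  obtain ⟨m1, hm1⟩ := exists_nat_cast_eq hP1ne
  by_cases hP2case : 2 ≤ (X ∩ V).encard
  · -- subcase B setup
    have hP3small : (Y ∩ U).encard ≤ 1 :=
      enat_le_one_of_lt_two (fun h => QUAD2 ⟨hP2case, h⟩)
    have hP3ne : (Y ∩ U).encard ≠ ⊤ := by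
      intro h
      rw [h] at hP3small
      exact absurd hP3small (by simp)
    obtain ⟨m3, hm3⟩ := exists_nat_cast_eq hP3ne
    have hm1le : m1 ≤ 1 := by rw [← hm1] at hP1small; exact_mod_cast hP1small
    have hm3le : m3 ≤ 1 := by rw [← hm3] at hP3small; exact_mod_cast hP3small
    have hU3' : (3:ℕ∞) ≤ (m1 : ℕ∞) + m3 + 1 := by
      rw [hm1, hm3, ← hUenc]; exact hU3
    have hm13 : m1 = 1 ∧ m3 = 1 := by
      have : (3:ℕ) ≤ m1 + m3 + 1 := by exact_mod_cast hU3'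
      omega
    obtain ⟨p, hP1⟩ := encard_eq_one.1 (by rw [← hm1, hm13.1]; norm_num : (X ∩ U).encard = 1)
    obtain ⟨s, hP3⟩ := encard_eq_one.1 (by rw [← hm3, hm13.2]; norm_num : (Y ∩ U).encard = 1)
    have hpXU : p ∈ X ∩ U := by rw [hP1]; rfl
    have hsYU : s ∈ Y ∩ U := by rw [hP3]; rfl
    have hpX : p ∈ X := hpXU.1
    have hpU : p ∈ U := hpXU.2
    have hsY : s ∈ Y := hsYU.1
    have hsU : s ∈ U := hsYU.2
    have hpT : p ∉ Tstar := (hP1T hpXU).2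
    have hsT : s ∉ Tstar := (hP3T hsYU).2
    have hpE : p ∈ M.E := (hP1T hpXU).1
    have hsE : s ∈ M.E := (hP3T hsYU).1
    have hps : p ≠ s := fun h => disjoint_left.1 hdXY hpX (h ▸ hsY)
    have hbp : b ≠ p := fun h => hpT (h ▸ hb)
    have hbs : b ≠ s := fun h => hsT (h ▸ hb)
    have hap : a ≠ p := fun h => hpT (h ▸ ha)
    have has : a ≠ s := fun h => hsT (h ▸ ha)
    have hUeq : U = {a, p, s} := by rw [idUq, hP1, hP3, singleton_union]
    have henc3 : ({a, p, s} : Set α).encard = 3 := by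
      rw [encard_insert_of_notMem (by simp [hap, has]), encard_pair hps]
      norm_num
    have hrk4 : eRk M {a, b, p, s} ≤ 3 := by
      have h1 : ({a, b, p, s} : Set α) = insert b U := by
        rw [hUeq]
        ext z
        simp only [mem_insert_iff, mem_singleton_iff]
        tauto
      rw [h1, eU, hUeq]
      exact (eRk_le_encard M _).trans (le_of_eq henc3)
    have hC4 : Circuit M {a, b, p, s} :=
      circuit4 h3 hfin hE4 hnofan hT hTcard ha hb hab hpE hsE hpT hsT hps hrk4
    have hsmem : s ∈ ({a, b, p, s} : Set α) := by simp
    have hdiffs : ({a, b, p, s} : Set α) \ {s} = {a, b, p} := by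
      ext z
      simp only [mem_diff, mem_insert_iff, mem_singleton_iff]
      constructor
      · rintro ⟨(rfl | rfl | rfl | rfl), hne⟩
        · exact Or.inl rfl
        · exact Or.inr (Or.inl rfl)
        · exact Or.inr (Or.inr rfl)
        · exact absurd rfl hne
      · rintro (rfl | rfl | rfl)
        · exact ⟨Or.inl rfl, has⟩
        · exact ⟨Or.inr (Or.inl rfl), hbs⟩
        · exact ⟨Or.inr (Or.inr (Or.inl rfl)), hps⟩
    have hinss : insert s ({a, b, p} : Set α) = {a, b, p, s} := by
      ext z
      simp only [mem_insert_iff, mem_singleton_iff]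
      tauto
    have hs_step : eRk M (insert s ({a, b, p} : Set α)) ≤ eRk M {a, b, p} := by
      rw [hinss]
      exact le_of_eq (by rw [circuit_er_diff' hC4 hsmem, hdiffs])
    have habp_sub : ({a, b, p} : Set α) ⊆ insert a X :=
      insert_subset (mem_insert _ _)
        (insert_subset (mem_insert_of_mem _ hbX) (singleton_subset_iff.2 (mem_insert_of_mem _ hpX)))
    have habsorbX : eRk M (insert s (insert a X)) ≤ eRk M (insert a X) :=
      absorb habp_sub hs_step (ne_top_of_ground hfin _)
    have id9 : M.E \ (Y ∩ V) = insert s (insert a X) := by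
      ext z
      constructor
      · rintro ⟨hzE, hzP⟩
        by_cases hzs : z = s
        · exact hzs ▸ mem_insert _ _
        by_cases hza : z = a
        · exact hza ▸ mem_insert_of_mem _ (mem_insert _ _)
        rcases hzXY z hzE hza with hzX | hzY
        · exact mem_insert_of_mem _ (mem_insert_of_mem _ hzX)
        · by_cases hzb : z = b
          · exact absurd (hzb ▸ hzY) hbY
          rcases hzUV z hzE hzb with hzU | hzV
          · have : z ∈ Y ∩ U := ⟨hzY, hzU⟩
            rw [hP3] at this
            exact absurd this hzs
          · exact absurd ⟨hzY, hzV⟩ hzP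
      · rintro (rfl | rfl | h)
        · exact ⟨hsE, fun hP => disjoint_left.1 hdUV hsU hP.2⟩
        · exact ⟨haE, fun hP => haY hP.1⟩
        · exact ⟨hXE h, fun hP => disjoint_left.1 hdXY h hP.1⟩
    have two2P4q := sep_lb h3 hfin zero_lt_two (by norm_num)
      ((inter_subset_left).trans hYE) rfl hP4big
      (compl_ab _ (fun h => haY h.1) (fun h => hbV h.2))
    have hcomplle : eRk M (M.E \ (Y ∩ V)) ≤ eRk M X := by
      rw [id9]
      exact habsorbX.trans (le_of_eq eX)
    have hP4le : eRk M (Y ∩ V) ≤ eRk M Y := eRk_mono inter_subset_left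
    have hP4eqY : eRk M (Y ∩ V) = eRk M Y := by
      obtain ⟨nE, hnE⟩ := exists_nat_cast_eq hfin
      obtain ⟨nX, hnX⟩ := exists_nat_cast_eq (ne_top_of_ground hfin X)
      obtain ⟨nY, hnY⟩ := exists_nat_cast_eq (ne_top_of_ground hfin Y)
      obtain ⟨nP4, hnP4⟩ := exists_nat_cast_eq (ne_top_of_ground hfin (Y ∩ V))
      obtain ⟨ncP4, hncP4⟩ := exists_nat_cast_eq (ne_top_of_ground hfin (M.E \ (Y ∩ V)))
      rw [← hnE, ← hnP4, ← hncP4] at two2P4q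
      rw [← hncP4, ← hnX] at hcomplle
      rw [← hnP4, ← hnY] at hP4le
      rw [← hnX, ← hnY, ← hnE] at eSumXY
      rw [← hnP4, ← hnY]
      have q1 : nE + 2 ≤ nP4 + ncP4 := by exact_mod_cast two2P4q
      have q2 : ncP4 ≤ nX := by exact_mod_cast hcomplle
      have q3 : nP4 ≤ nY := by exact_mod_cast hP4le
      have q4 : nX + nY = nE + 2 := by exact_mod_cast eSumXY
      have : nP4 = nY := by omega
      exact_mod_cast this
    have ha_P4 : eRk M (insert a (Y ∩ V)) ≤ eRk M (Y ∩ V) := by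
      calc eRk M (insert a (Y ∩ V)) ≤ eRk M (insert a Y) :=
            eRk_mono (insert_subset_insert inter_subset_left)
        _ = eRk M Y := eY
        _ = eRk M (Y ∩ V) := hP4eqY.symm
    have habsV : eRk M (insert a V) ≤ eRk M V :=
      absorb inter_subset_right ha_P4 (ne_top_of_ground hfin _)
    have hfinal : eRk M (insert a (insert b V)) ≤ eRk M V :=
      (absorb (subset_insert b V) habsV (ne_top_of_ground hfin _)).trans (le_of_eq eV)
    -- strict fact : a not in closure of U \ {a}
    have hUa : eRk M (U \ {a}) + 1 ≤ eRk M U := by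
      by_contra hlt
      push_neg at hlt
      have hle : eRk M U ≤ eRk M (U \ {a}) := Order.le_of_lt_add_one (by exact_mod_cast hlt)
      have haUa : a ∉ U \ {a} := fun h => h.2 rfl
      have hrw : insert a (U \ {a}) = U := by
        rw [insert_diff_singleton]
        exact insert_eq_of_mem haU
      obtain ⟨C, hC, haC, hCsub⟩ := clmem_circuit hfin haUa (diff_subset.trans hUE) haE
        (by rw [hrw]; exact hle)
      rw [hrw] at hCsub
      refine orth hT hfin hC (d := a) ?_
      ext z
      constructor
      · rintro ⟨hzC, hzT⟩
        rcases (hTeq ▸ hzT : z ∈ ({a,b,c} : Set α)) with rfl | rfl | rfl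
        · rfl
        · exact absurd (hCsub hzC) hbU
        · exact absurd (hCsub hzC) hcU
      · rintro rfl
        exact ⟨haC, ha⟩
    have idSF : M.E \ (U \ {a}) = insert a (insert b V) := by
      ext z
      constructor
      · rintro ⟨hzE, hzn⟩
        by_cases hza : z = a
        · exact hza ▸ mem_insert _ _
        by_cases hzb : z = b
        · exact hzb ▸ mem_insert_of_mem _ (mem_insert _ _)
        rcases hzUV z hzE hzb with hzU | hzV
        · exact absurd ⟨hzU, hza⟩ hzn
        · exact mem_insert_of_mem _ (mem_insert_of_mem _ hzV)
      · rintro (rfl | rfl | h)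
        · exact ⟨haE, fun h => h.2 rfl⟩
        · exact ⟨hbE, fun h => hbU h.1⟩
        · exact ⟨hVE h, fun h' => disjoint_left.1 hdUV h'.1 h⟩
    have hUda : U \ {a} = {p, s} := by
      rw [hUeq]
      ext z
      simp only [mem_diff, mem_insert_iff, mem_singleton_iff]
      constructor
      · rintro ⟨(rfl | rfl | rfl), hne⟩
        · exact absurd rfl hne
        · exact Or.inl rfl
        · exact Or.inr rfl
      · rintro (rfl | rfl)
        · exact ⟨Or.inr (Or.inl rfl), Ne.symm hap⟩
        · exact ⟨Or.inr (Or.inr rfl), Ne.symm has⟩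
    have two2SF := sep_lb h3 hfin zero_lt_two (by norm_num)
      (diff_subset.trans hUE) idSF.symm
      (by rw [hUda, encard_pair hps]; exact_mod_cast le_rfl)
      (by
        have : ({a, b} : Set α) ⊆ insert a (insert b V) :=
          insert_subset (mem_insert _ _)
            (singleton_subset_iff.2 (mem_insert_of_mem _ (mem_insert _ _)))
        calc ((2:ℕ):ℕ∞) = ({a,b} : Set α).encard := by
              rw [encard_pair hab]; norm_num
          _ ≤ _ := encard_mono this)
    obtain ⟨nE, hnE⟩ := exists_nat_cast_eq hfin
    obtain ⟨nU, hnU⟩ := exists_nat_cast_eq (ne_top_of_ground hfin U)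
    obtain ⟨nV, hnV⟩ := exists_nat_cast_eq (ne_top_of_ground hfin V)
    obtain ⟨nUa, hnUa⟩ := exists_nat_cast_eq (ne_top_of_ground hfin (U \ {a}))
    obtain ⟨nf, hnf⟩ := exists_nat_cast_eq (ne_top_of_ground hfin (insert a (insert b V)))
    rw [← hnE, ← hnUa, ← hnf] at two2SF
    rw [← hnUa, ← hnU] at hUa
    rw [← hnf, ← hnV] at hfinal
    rw [← hnU, ← hnV, ← hnE] at eSumUV
    have q1 : nE + 2 ≤ nUa + nf := by exact_mod_cast two2SF
    have q2 : nUa + 1 ≤ nU := by exact_mod_cast hUa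
    have q3 : nf ≤ nV := by exact_mod_cast hfinal
    have q4 : nU + nV = nE + 2 := by exact_mod_cast eSumUV
    omega
  · -- subcase A setup
    have hP2small : (X ∩ V).encard ≤ 1 := enat_le_one_of_lt_two hP2case
    have hP2ne : (X ∩ V).encard ≠ ⊤ := by
      intro h
      rw [h] at hP2small
      exact absurd hP2small (by simp)
    obtain ⟨m2, hm2⟩ := exists_nat_cast_eq hP2ne
    have hm1le : m1 ≤ 1 := by rw [← hm1] at hP1small; exact_mod_cast hP1small
    have hm2le : m2 ≤ 1 := by rw [← hm2] at hP2small; exact_mod_cast hP2small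
    have hX3' : (3:ℕ∞) ≤ (m1 : ℕ∞) + m2 + 1 := by
      rw [hm1, hm2, ← hXenc]; exact hX3
    have hm12 : m1 = 1 ∧ m2 = 1 := by
      have : (3:ℕ) ≤ m1 + m2 + 1 := by exact_mod_cast hX3'
      omega
    obtain ⟨p, hP1⟩ := encard_eq_one.1 (by rw [← hm1, hm12.1]; norm_num : (X ∩ U).encard = 1)
    obtain ⟨q, hP2⟩ := encard_eq_one.1 (by rw [← hm2, hm12.2]; norm_num : (X ∩ V).encard = 1)
    have hpXU : p ∈ X ∩ U := by rw [hP1]; rfl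
    have hqXV : q ∈ X ∩ V := by rw [hP2]; rfl
    have hpX : p ∈ X := hpXU.1
    have hpU : p ∈ U := hpXU.2
    have hqX : q ∈ X := hqXV.1
    have hqV : q ∈ V := hqXV.2
    have hpT : p ∉ Tstar := (hP1T hpXU).2
    have hqT : q ∉ Tstar := (hP2T hqXV).2
    have hpE : p ∈ M.E := (hP1T hpXU).1
    have hqE : q ∈ M.E := (hP2T hqXV).1
    have hpq : p ≠ q := fun h => disjoint_left.1 hdUV hpU (h ▸ hqV)
    have hbp : b ≠ p := fun h => hpT (h ▸ hb)
    have hbq : b ≠ q := fun h => hqT (h ▸ hb)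
    have hap : a ≠ p := fun h => hpT (h ▸ ha)
    have haq : a ≠ q := fun h => hqT (h ▸ ha)
    have hXeq : X = {b, p, q} := by rw [idXq, hP1, hP2, singleton_union]
    have henc3 : ({b, p, q} : Set α).encard = 3 := by
      rw [encard_insert_of_notMem (by simp [hbp, hbq]), encard_pair hpq]
      norm_num
    have hrk4 : eRk M {a, b, p, q} ≤ 3 := by
      have h1 : ({a, b, p, q} : Set α) = insert a X := by rw [hXeq]
      rw [h1, eX, hXeq]
      exact (eRk_le_encard M _).trans (le_of_eq henc3)
    have hC4 : Circuit M {a, b, p, q} :=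
      circuit4 h3 hfin hE4 hnofan hT hTcard ha hb hab hpE hqE hpT hqT hpq hrk4
    have hqmem : q ∈ ({a, b, p, q} : Set α) := by simp
    have hdiffq : ({a, b, p, q} : Set α) \ {q} = {a, b, p} := by
      ext z
      simp only [mem_diff, mem_insert_iff, mem_singleton_iff]
      constructor
      · rintro ⟨(rfl | rfl | rfl | rfl), hne⟩
        · exact Or.inl rfl
        · exact Or.inr (Or.inl rfl)
        · exact Or.inr (Or.inr rfl)
        · exact absurd rfl hne
      · rintro (rfl | rfl | rfl)
        · exact ⟨Or.inl rfl, haq⟩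
        · exact ⟨Or.inr (Or.inl rfl), hbq⟩
        · exact ⟨Or.inr (Or.inr (Or.inl rfl)), hpq⟩
    have hinsq : insert q ({a, b, p} : Set α) = {a, b, p, q} := by
      ext z
      simp only [mem_insert_iff, mem_singleton_iff]
      tauto
    have hq_step : eRk M (insert q ({a, b, p} : Set α)) ≤ eRk M {a, b, p} := by
      rw [hinsq]
      exact le_of_eq (by rw [circuit_er_diff' hC4 hqmem, hdiffq])
    have habp_sub : ({a, b, p} : Set α) ⊆ insert b U :=
      insert_subset (mem_insert_of_mem _ haU)
        (insert_subset (mem_insert _ _) (singleton_subset_iff.2 (mem_insert_of_mem _ hpU)))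
    have habsorbU : eRk M (insert q (insert b U)) ≤ eRk M (insert b U) :=
      absorb habp_sub hq_step (ne_top_of_ground hfin _)
    have id9 : M.E \ (Y ∩ V) = insert q (insert b U) := by
      ext z
      constructor
      · rintro ⟨hzE, hzP⟩
        by_cases hzq : z = q
        · exact hzq ▸ mem_insert _ _
        by_cases hzb : z = b
        · exact hzb ▸ mem_insert_of_mem _ (mem_insert _ _)
        rcases hzUV z hzE hzb with hzU | hzV
        · exact mem_insert_of_mem _ (mem_insert_of_mem _ hzU)
        · by_cases hza : z = a
          · exact absurd (hza ▸ haV) (fun h => h hzV)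
          rcases hzXY z hzE hza with hzX | hzY
          · have : z ∈ X ∩ V := ⟨hzX, hzV⟩
            rw [hP2] at this
            exact absurd this hzq
          · exact absurd ⟨hzY, hzV⟩ hzP
      · rintro (rfl | rfl | h)
        · exact ⟨hqE, fun hP => disjoint_left.1 hdXY hqX hP.1⟩
        · exact ⟨hbE, fun hP => hbY hP.1⟩
        · exact ⟨hUE h, fun hP => disjoint_left.1 hdUV h hP.2⟩
    have two2P4q := sep_lb h3 hfin zero_lt_two (by norm_num)
      ((inter_subset_left).trans hYE) rfl hP4big
      (compl_ab _ (fun h => haY h.1) (fun h => hbV h.2))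
    have hcomplle : eRk M (M.E \ (Y ∩ V)) ≤ eRk M U := by
      rw [id9]
      exact habsorbU.trans (le_of_eq eU)
    have hP4le : eRk M (Y ∩ V) ≤ eRk M V := eRk_mono inter_subset_right
    have hP4eqV : eRk M (Y ∩ V) = eRk M V := by
      obtain ⟨nE, hnE⟩ := exists_nat_cast_eq hfin
      obtain ⟨nU, hnU⟩ := exists_nat_cast_eq (ne_top_of_ground hfin U)
      obtain ⟨nV, hnV⟩ := exists_nat_cast_eq (ne_top_of_ground hfin V)
      obtain ⟨nP4, hnP4⟩ := exists_nat_cast_eq (ne_top_of_ground hfin (Y ∩ V))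
      obtain ⟨ncP4, hncP4⟩ := exists_nat_cast_eq (ne_top_of_ground hfin (M.E \ (Y ∩ V)))
      rw [← hnE, ← hnP4, ← hncP4] at two2P4q
      rw [← hncP4, ← hnU] at hcomplle
      rw [← hnP4, ← hnV] at hP4le
      rw [← hnU, ← hnV, ← hnE] at eSumUV
      rw [← hnP4, ← hnV]
      have q1 : nE + 2 ≤ nP4 + ncP4 := by exact_mod_cast two2P4q
      have q2 : ncP4 ≤ nU := by exact_mod_cast hcomplle
      have q3 : nP4 ≤ nV := by exact_mod_cast hP4le
      have q4 : nU + nV = nE + 2 := by exact_mod_cast eSumUV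
      have : nP4 = nV := by omega
      exact_mod_cast this
    have idV9 : V = insert q (Y ∩ V) := by
      ext z
      constructor
      · intro hz
        by_cases hza : z = a
        · exact absurd (hza ▸ hz) haV
        rcases hzXY z (hVE hz) hza with hzX | hzY
        · have : z ∈ X ∩ V := ⟨hzX, hz⟩
          rw [hP2] at this
          exact this ▸ mem_insert _ _
        · exact mem_insert_of_mem _ ⟨hzY, hz⟩
      · rintro (rfl | h)
        · exact hqV
        · exact h.2
    have hb_P4 : eRk M (insert b (Y ∩ V)) ≤ eRk M (Y ∩ V) := by
      calc eRk M (insert b (Y ∩ V)) ≤ eRk M (insert b V) :=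
            eRk_mono (insert_subset_insert inter_subset_right)
        _ = eRk M V := eV
        _ = eRk M (Y ∩ V) := hP4eqV.symm
    have habsY : eRk M (insert b Y) ≤ eRk M Y :=
      absorb inter_subset_left hb_P4 (ne_top_of_ground hfin _)
    have hfinal : eRk M (insert a (insert b Y)) ≤ eRk M Y :=
      (absorb (subset_insert b Y) (le_of_eq eY) (ne_top_of_ground hfin _)).trans habsY
    -- the strict fact: b is not in the closure of X \ {b}
    have hXb : eRk M (X \ {b}) + 1 ≤ eRk M X := by
      by_contra hlt
      push_neg at hlt
      have hle : eRk M X ≤ eRk M (X \ {b}) := Order.le_of_lt_add_one (by exact_mod_cast hlt)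
      have hbXb : b ∉ X \ {b} := fun h => h.2 rfl
      have hrw : insert b (X \ {b}) = X := by
        rw [insert_diff_singleton]
        exact insert_eq_of_mem hbX
      obtain ⟨C, hC, hbC, hCsub⟩ := clmem_circuit hfin hbXb (diff_subset.trans hXE) hbE
        (by rw [hrw]; exact hle)
      rw [hrw] at hCsub
      refine orth hT hfin hC (d := b) ?_
      ext z
      constructor
      · rintro ⟨hzC, hzT⟩
        rcases (hTeq ▸ hzT : z ∈ ({a,b,c} : Set α)) with rfl | rfl | rfl
        · exact absurd (hCsub hzC) haX
        · rfl
        · exact absurd (hCsub hzC) hcX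
      · rintro rfl
        exact ⟨hbC, hb⟩
    have idSF : M.E \ (X \ {b}) = insert a (insert b Y) := by
      ext z
      constructor
      · rintro ⟨hzE, hzn⟩
        by_cases hza : z = a
        · exact hza ▸ mem_insert _ _
        by_cases hzb : z = b
        · exact hzb ▸ mem_insert_of_mem _ (mem_insert _ _)
        rcases hzXY z hzE hza with hzX | hzY
        · exact absurd ⟨hzX, hzb⟩ hzn
        · exact mem_insert_of_mem _ (mem_insert_of_mem _ hzY)
      · rintro (rfl | rfl | h)
        · exact ⟨haE, fun h => haX h.1⟩
        · exact ⟨hbE, fun h => h.2 rfl⟩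
        · exact ⟨hYE h, fun h' => disjoint_left.1 hdXY h'.1 h⟩
    have hXdb : X \ {b} = {p, q} := by
      rw [hXeq]
      ext z
      simp only [mem_diff, mem_insert_iff, mem_singleton_iff]
      constructor
      · rintro ⟨(rfl | rfl | rfl), hne⟩
        · exact absurd rfl hne
        · exact Or.inl rfl
        · exact Or.inr rfl
      · rintro (rfl | rfl)
        · exact ⟨Or.inr (Or.inl rfl), Ne.symm hbp⟩
        · exact ⟨Or.inr (Or.inr rfl), Ne.symm hbq⟩
    have two2SF := sep_lb h3 hfin zero_lt_two (by norm_num)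
      (diff_subset.trans hXE) idSF.symm
      (by rw [hXdb, encard_pair hpq]; exact_mod_cast le_rfl)
      (by
        have : ({a, b} : Set α) ⊆ insert a (insert b Y) :=
          insert_subset (mem_insert _ _)
            (singleton_subset_iff.2 (mem_insert_of_mem _ (mem_insert _ _)))
        calc ((2:ℕ):ℕ∞) = ({a,b} : Set α).encard := by
              rw [encard_pair hab]; norm_num
          _ ≤ _ := encard_mono this)
    obtain ⟨nE, hnE⟩ := exists_nat_cast_eq hfin
    obtain ⟨nX, hnX⟩ := exists_nat_cast_eq (ne_top_of_ground hfin X)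
    obtain ⟨nY, hnY⟩ := exists_nat_cast_eq (ne_top_of_ground hfin Y)
    obtain ⟨nXb, hnXb⟩ := exists_nat_cast_eq (ne_top_of_ground hfin (X \ {b}))
    obtain ⟨nf, hnf⟩ := exists_nat_cast_eq (ne_top_of_ground hfin (insert a (insert b Y)))
    rw [← hnE, ← hnXb, ← hnf] at two2SF
    rw [← hnXb, ← hnX] at hXb
    rw [← hnf, ← hnY] at hfinal
    rw [← hnX, ← hnY, ← hnE] at eSumXY
    have q1 : nE + 2 ≤ nXb + nf := by exact_mod_cast two2SF
    have q2 : nXb + 1 ≤ nX := by exact_mod_cast hXb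
    have q3 : nf ≤ nY := by exact_mod_cast hfinal
    have q4 : nX + nY = nE + 2 := by exact_mod_cast eSumXY
    omega
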